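/- arXiv:1610.05325 — 5 statements merged into one kernel-verified Lean document; each statement's English description precedes it below -/
import Mathlib

section
/- If x̂ ∈ I maximises ϑ(x)/ψ_r(x) over I, then for every x ≤ x̂ the hitting time τ_{x̂} is an optimal stopping time for the problem v(x). -/
open Filter Set Topology

noncomputable section

/-- The filter of real numbers tending to the (possibly infinite) boundary point `a ∈ [-∞,∞]`
from the right, i.e. "x → a, x > a". -/
def fromRight (a : EReal) : Filter ℝ :=
  Filter.comap (fun x : ℝ => (x : EReal)) (nhdsWithin a (Set.Ioi a))

/-- The filter of real numbers tending to the boundary point `b` from the left. -/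
def fromLeft (b : EReal) : Filter ℝ :=
  Filter.comap (fun x : ℝ => (x : EReal)) (nhdsWithin b (Set.Iio b))

/-- An abstract setup for optimal stopping of a regular one-dimensional diffusion
`X` on the interval `I = (a,b)` with natural boundaries, discount rate `r`, and
fundamental `r`-excessive functions `ψ_r` (increasing) and `φ_r` (decreasing).

`Stop` is the collection of stopping times of `X`; for a stopping time `τ`,
`E x τ ϑ` denotes the expected discounted reward `E^x[e^{-rτ} ϑ(X_τ) 1_{τ<∞}]`,
`P x τ S` denotes the probability `ℙ^x(X_τ ∈ S, τ < ∞)`, `hit y` is the first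
hitting time `τ_y = inf{t ≥ 0 : X_t = y}`, and `never` is the stopping time `τ ≡ ∞`. -/
structure Setup where
  a : EReal
  b : EReal
  hab : a < b
  r : ℝ
  hr : 0 < r
  psi : ℝ → ℝ
  phi : ℝ → ℝ
  Stop : Type
  never : Stop
  hit : ℝ → Stop
  E : ℝ → Stop → (ℝ → EReal) → EReal
  P : ℝ → Stop → Set ℝ → ENNReal
  psi_pos : ∀ ⦃x : ℝ⦄, a < ↑x → ↑x < b → 0 < psi x
  phi_pos : ∀ ⦃x : ℝ⦄, a < ↑x → ↑x < b → 0 < phi x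
  psi_cont : ContinuousOn psi {x : ℝ | a < ↑x ∧ ↑x < b}
  phi_cont : ContinuousOn phi {x : ℝ | a < ↑x ∧ ↑x < b}
  psi_mono : StrictMonoOn psi {x : ℝ | a < ↑x ∧ ↑x < b}
  phi_anti : StrictAntiOn phi {x : ℝ | a < ↑x ∧ ↑x < b}
  psi_lim_a : Filter.Tendsto psi (fromRight a) (nhds 0)
  psi_lim_b : Filter.Tendsto psi (fromLeft b) Filter.atTop
  phi_lim_b : Filter.Tendsto phi (fromLeft b) (nhds 0)
  phi_lim_a : Filter.Tendsto phi (fromRight a) Filter.atTop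
  psi_excessive : ∀ ⦃x : ℝ⦄, a < ↑x → ↑x < b → ∀ τ : Stop,
    E x τ (fun s => ((psi s : ℝ) : EReal)) ≤ ((psi x : ℝ) : EReal)
  phi_excessive : ∀ ⦃x : ℝ⦄, a < ↑x → ↑x < b → ∀ τ : Stop,
    E x τ (fun s => ((phi s : ℝ) : EReal)) ≤ ((phi x : ℝ) : EReal)
  E_never : ∀ (x : ℝ) (ϑ : ℝ → EReal), E x never ϑ = 0
  E_mono : ∀ (x : ℝ) (τ : Stop) (ϑ ϑ' : ℝ → EReal),
    (∀ s : ℝ, a < ↑s → ↑s < b → ϑ s ≤ ϑ' s) → E x τ ϑ ≤ E x τ ϑ'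
  E_smul : ∀ (x : ℝ) (τ : Stop) (c : ℝ) (ϑ : ℝ → EReal), 0 ≤ c →
    E x τ (fun s => (c : EReal) * ϑ s) = (c : EReal) * E x τ ϑ
  E_hit_lt : ∀ ⦃x y : ℝ⦄, a < ↑x → ↑y < b → x < y → ∀ ϑ : ℝ → EReal,
    E x (hit y) ϑ = ϑ y * ((psi x / psi y : ℝ) : EReal)
  E_hit_ge : ∀ ⦃x y : ℝ⦄, a < ↑y → ↑x < b → y ≤ x → ∀ ϑ : ℝ → EReal,
    E x (hit y) ϑ = ϑ y * ((phi x / phi y : ℝ) : EReal)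
  regular : ∀ ⦃x y : ℝ⦄, a < ↑x → ↑x < b → a < ↑y → ↑y < b →
    0 < P x (hit y) Set.univ

/-- Embedding of a real-valued payoff into `EReal`. -/
def toE (ϑ : ℝ → ℝ) : ℝ → EReal := fun s => ((ϑ s : ℝ) : EReal)

namespace Setup
variable (S : Setup)

/-- The state space `I = (a,b)`. -/
def I : Set ℝ := {x : ℝ | S.a < ↑x ∧ ↑x < S.b}

/-- The value function `v(x) = sup_τ E^x[e^{-rτ} ϑ(X_τ) 1_{τ<∞}]`. -/
def val (ϑ : ℝ → EReal) (x : ℝ) : EReal := ⨆ τ : S.Stop, S.E x τ ϑ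

/-- A stopping time `τ` is optimal for the problem `v(x)` if it attains the supremum. -/
def IsOptimal (ϑ : ℝ → EReal) (x : ℝ) (τ : S.Stop) : Prop :=
  S.E x τ ϑ = S.val ϑ x

/-- `L_c = limsup_{x→a} (−x)/φ_r(x)`. -/
def Lc : EReal := Filter.limsup (fun x : ℝ => ((-x / S.phi x : ℝ) : EReal)) (fromRight S.a)

end Setup

/-- Corollary 1 of the paper: if `x̂ ∈ I` maximises `ϑ/ψ_r` over `I`, then for
every `x ≤ x̂` in `I` the hitting time `τ_x̂` is optimal for the problem `v(x)`. -/
theorem maximiser_psi_optimal (S : Setup) (ϑ : ℝ → ℝ) (hϑ : Measurable ϑ)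
    (hsup : ∃ x ∈ S.I, 0 < ϑ x)
    (xhat : ℝ) (hxhat : xhat ∈ S.I)
    (hmax : ∀ x ∈ S.I, ϑ x / S.psi x ≤ ϑ xhat / S.psi xhat) :
    ∀ x ∈ S.I, x ≤ xhat → S.IsOptimal (toE ϑ) x (S.hit xhat) := by
  intro x hx hxle
  obtain ⟨hxa, hxb⟩ := hx
  obtain ⟨hha, hhb⟩ := hxhat
  set c : ℝ := ϑ xhat / S.psi xhat with hc
  have hψhat : 0 < S.psi xhat := S.psi_pos hha hhb
  have hψx : 0 < S.psi x := S.psi_pos hxa hxb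
  -- c > 0
  have hc0 : 0 < c := by
    obtain ⟨x₀, hx₀, hϑx₀⟩ := hsup
    have := hmax x₀ hx₀
    have hψ₀ : 0 < S.psi x₀ := S.psi_pos hx₀.1 hx₀.2
    exact lt_of_lt_of_le (div_pos hϑx₀ hψ₀) this
  -- value of hitting xhat equals c * psi x
  have hval : S.E x (S.hit xhat) (toE ϑ) = ((c * S.psi x : ℝ) : EReal) := by
    rcases lt_or_eq_of_le hxle with h | h
    · rw [S.E_hit_lt hxa hhb h (toE ϑ)]
      show ((ϑ xhat : ℝ) : EReal) * _ = _
      rw [← EReal.coe_mul]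
      congr 1
      field_simp [hc]
      rw [hc]; field_simp
    · subst h
      rw [S.E_hit_ge hxa hxb le_rfl (toE ϑ)]
      have hφ : 0 < S.phi x := S.phi_pos hxa hxb
      show ((ϑ x : ℝ) : EReal) * _ = _
      rw [← EReal.coe_mul]
      congr 1
      field_simp [hc]
      rw [hc]; field_simp
  -- upper bound for every stopping time
  have hbound : ∀ τ : S.Stop, S.E x τ (toE ϑ) ≤ ((c * S.psi x : ℝ) : EReal) := by
    intro τ
    have h1 : S.E x τ (toE ϑ) ≤ S.E x τ (fun s => (c : EReal) * ((S.psi s : ℝ) : EReal)) := by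
      apply S.E_mono
      intro s hsa hsb
      have hψs : 0 < S.psi s := S.psi_pos hsa hsb
      have : ϑ s ≤ c * S.psi s := by
        have := hmax s ⟨hsa, hsb⟩
        calc ϑ s = (ϑ s / S.psi s) * S.psi s := by field_simp
          _ ≤ c * S.psi s := by
              exact mul_le_mul_of_nonneg_right this hψs.le
      calc toE ϑ s = ((ϑ s : ℝ) : EReal) := rfl
        _ ≤ ((c * S.psi s : ℝ) : EReal) := EReal.coe_le_coe_iff.mpr this
        _ = (c : EReal) * ((S.psi s : ℝ) : EReal) := EReal.coe_mul _ _
    have h2 : S.E x τ (fun s => (c : EReal) * ((S.psi s : ℝ) : EReal))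
        = (c : EReal) * S.E x τ (fun s => ((S.psi s : ℝ) : EReal)) :=
      S.E_smul x τ c _ hc0.le
    have h3 : (c : EReal) * S.E x τ (fun s => ((S.psi s : ℝ) : EReal))
        ≤ (c : EReal) * ((S.psi x : ℝ) : EReal) := by
      apply mul_le_mul_of_nonneg_left (S.psi_excessive hxa hxb τ)
      exact_mod_cast hc0.le
    calc S.E x τ (toE ϑ) ≤ (c : EReal) * S.E x τ (fun s => ((S.psi s : ℝ) : EReal)) :=
          h1.trans_eq h2
      _ ≤ (c : EReal) * ((S.psi x : ℝ) : EReal) := h3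
      _ = ((c * S.psi x : ℝ) : EReal) := (EReal.coe_mul _ _).symm
  -- conclude
  refine le_antisymm (le_iSup (fun τ => S.E x τ (toE ϑ)) (S.hit xhat)) (iSup_le fun τ => ?_)
  rw [hval]
  exact hbound τ

end
end

section
/- Define ζ_0 ≡ 0 and ζ_{n+1} = Tζ_n, where for ζ: I×(0,1]→[0,∞): Tζ(x,α) = sup_τ E^x[e^{−rτ}(−αX_τ + αp_c + h^ζ(X_τ,α))1_{τ<∞}] with h^ζ(x,α) = (αK_c + ζ(x*,Aα))·ψ_r(x)/ψ_r(x*) for x < x* and h^ζ(x,α) = αK_c + ζ(x,Aα) for x ≥ x*. Then for every n ≥ 0 and every α ∈ (0,1], ζ_n(x,α) = α·ζ̂_n(x), where ζ̂_n(x) := ζ_n(x,1); moreover ζ̂_n = T̂ⁿ0, where T̂ is the normalised optimal stopping operator. -/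
open Filter Set Topology

noncomputable section

/-- The single option payoff `h(x) = -x + p_c + K_c·ψ_r(x)/ψ_r(x*)` for `x < x*` and
`h(x) = -x + p_c + K_c` for `x ≥ x*`. -/
def hpay (S : Setup) (pc Kc xstar : ℝ) (x : ℝ) : ℝ :=
  if x < xstar then -x + pc + Kc * (S.psi x / S.psi xstar) else -x + pc + Kc

/-- Case A: `L_c ≤ h(x)/φ_r(x)` for some `x ∈ I`. -/
def caseA (S : Setup) (pc Kc xstar : ℝ) : Prop :=
  ∃ x ∈ S.I, S.Lc ≤ ((hpay S pc Kc xstar x / S.phi x : ℝ) : EReal)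

/-- Case B: `∞ > L_c > h(x)/φ_r(x)` for all `x ∈ I`. -/
def caseB (S : Setup) (pc Kc xstar : ℝ) : Prop :=
  S.Lc ≠ ⊤ ∧ ∀ x ∈ S.I, ((hpay S pc Kc xstar x / S.phi x : ℝ) : EReal) < S.Lc

/-- Case C: `L_c = ∞`. -/
def caseC (S : Setup) : Prop := S.Lc = ⊤

/-- The payoff `ĥ(x,ζ̂)` of the normalised lifetime problem with continuation value `ζ̂`:
`ĥ(x,ζ̂) = −x + p_c + (K_c + A·ζ̂(x*))·ψ_r(x)/ψ_r(x*)` for `x < x*`, and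
`ĥ(x,ζ̂) = −x + p_c + K_c + A·ζ̂(x)` for `x ≥ x*`. -/
def hhat (S : Setup) (pc Kc xstar A : ℝ) (ζ : ℝ → EReal) (x : ℝ) : EReal :=
  if x < xstar then
    ((-x + pc : ℝ) : EReal)
      + ((S.psi x / S.psi xstar : ℝ) : EReal) * (((Kc : ℝ) : EReal) + ((A : ℝ) : EReal) * ζ xstar)
  else ((-x + pc + Kc : ℝ) : EReal) + ((A : ℝ) : EReal) * ζ x

/-- The normalised optimal stopping operator `T̂ζ̂(x) = sup_τ E^x[e^{−rτ} ĥ(X_τ,ζ̂) 1_{τ<∞}]`. -/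
def That (S : Setup) (pc Kc xstar A : ℝ) (ζ : ℝ → EReal) : ℝ → EReal :=
  fun x => ⨆ τ : S.Stop, S.E x τ (hhat S pc Kc xstar A ζ)

/-- The iterate `T̂ⁿ0`. -/
def ThatIter (S : Setup) (pc Kc xstar A : ℝ) (n : ℕ) : ℝ → EReal :=
  (That S pc Kc xstar A)^[n] (fun _ => 0)

/-- The lifetime value function `V̂(x) = lim_{n→∞} T̂ⁿ0(x)`; since the iterates are monotone
in `n`, the limit is the (pointwise monotone) supremum. -/
def Vhat (S : Setup) (pc Kc xstar A : ℝ) (x : ℝ) : EReal :=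
  ⨆ n : ℕ, ThatIter S pc Kc xstar A n x

/-- An admissible continuation value: (real-valued) nonnegative on `I`, continuous on
`(a,x*]`, with `ζ̂/φ_r` nonincreasing on `[x*,b)`. -/
def Admissible (S : Setup) (xstar : ℝ) (ζ : ℝ → EReal) : Prop :=
  (∀ x ∈ S.I, 0 ≤ ζ x ∧ ζ x ≠ ⊤) ∧
  ContinuousOn ζ {x : ℝ | S.a < ↑x ∧ x ≤ xstar} ∧
  AntitoneOn (fun x => ζ x / ((S.phi x : ℝ) : EReal)) {x : ℝ | xstar ≤ x ∧ ↑x < S.b}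

/-- Regime (α): the lifetime value strictly dominates the single option value on `[x*,b)`. -/
def regimeAlpha (S : Setup) (pc Kc xstar A : ℝ) : Prop :=
  ∀ x ∈ S.I, xstar ≤ x →
    S.val (toE (hpay S pc Kc xstar)) x < Vhat S pc Kc xstar A x

/-- Regime (β): the lifetime value equals the single option value on `[x*,b)`
(including the case that both are infinite). -/
def regimeBeta (S : Setup) (pc Kc xstar A : ℝ) : Prop :=
  ∀ x ∈ S.I, xstar ≤ x →
    Vhat S pc Kc xstar A x = S.val (toE (hpay S pc Kc xstar)) x

/-- The payoff `h^ζ(x,α)` entering the two-argument (capacity-dependent) operator `T`. -/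
def hcont (S : Setup) (Kc xstar A : ℝ) (ζ : ℝ → ℝ → EReal) (x α : ℝ) : EReal :=
  if x < xstar then
    ((S.psi x / S.psi xstar : ℝ) : EReal) * (((α * Kc : ℝ) : EReal) + ζ xstar (A * α))
  else ((α * Kc : ℝ) : EReal) + ζ x (A * α)

/-- The two-argument optimal stopping operator
`Tζ(x,α) = sup_τ E^x[e^{−rτ}(−αX_τ + αp_c + h^ζ(X_τ,α)) 1_{τ<∞}]`. -/
def TwoArgOp (S : Setup) (pc Kc xstar A : ℝ) (ζ : ℝ → ℝ → EReal) : ℝ → ℝ → EReal :=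
  fun x α => ⨆ τ : S.Stop,
    S.E x τ (fun s => ((-(α * s) + α * pc : ℝ) : EReal) + hcont S Kc xstar A ζ s α)

/-- The iterate `ζ_n = Tⁿ0`. -/
def TopIter (S : Setup) (pc Kc xstar A : ℝ) (n : ℕ) : ℝ → ℝ → EReal :=
  (TwoArgOp S pc Kc xstar A)^[n] (fun _ _ => 0)

private lemma ereal_coe_mul_add_left {c : ℝ} (hc : 0 < c) (d : ℝ) (y : EReal) :
    (c : EReal) * ((d : EReal) + y) = ((c * d : ℝ) : EReal) + (c : EReal) * y := by
  induction y using EReal.rec with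
  | bot => rw [EReal.add_bot, EReal.coe_mul_bot_of_pos hc, EReal.add_bot]
  | coe y => norm_cast; ring
  | top => rw [EReal.coe_add_top, EReal.coe_mul_top_of_pos hc, EReal.coe_add_top]

private lemma ereal_scale_aux {c : ℝ} (hc : 0 < c) (u v w : ℝ) (R z : EReal) :
    ((c * u : ℝ) : EReal) + R * (((c * v : ℝ) : EReal) + ((w * c : ℝ) : EReal) * z)
      = (c : EReal) * (((u : ℝ) : EReal)
        + R * (((v : ℝ) : EReal) + ((w : ℝ) : EReal) * z)) := by
  have hwz : ((w * c : ℝ) : EReal) * z = (c : EReal) * (((w : ℝ) : EReal) * z) := by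
    rw [← mul_assoc, ← EReal.coe_mul, mul_comm w c]
  rw [ereal_coe_mul_add_left hc, mul_left_comm, ereal_coe_mul_add_left hc, hwz]

private lemma ereal_scale_aux2 {c : ℝ} (hc : 0 < c) (u v w : ℝ) (z : EReal) :
    ((c * u : ℝ) : EReal) + (((c * v : ℝ) : EReal) + ((w * c : ℝ) : EReal) * z)
      = (c : EReal) * (((u : ℝ) : EReal)
        + (((v : ℝ) : EReal) + ((w : ℝ) : EReal) * z)) := by
  have hwz : ((w * c : ℝ) : EReal) * z = (c : EReal) * (((w : ℝ) : EReal) * z) := by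
    rw [← mul_assoc, ← EReal.coe_mul, mul_comm w c]
  rw [ereal_coe_mul_add_left hc, ereal_coe_mul_add_left hc, hwz]

private lemma ereal_mul_iSup {ι : Type*} [Nonempty ι] {c : ℝ} (hc : 0 < c) (f : ι → EReal) :
    (c : EReal) * (⨆ i, f i) = ⨆ i, (c : EReal) * f i := by
  have hc0 : (0 : EReal) < (c : EReal) := by exact_mod_cast hc
  have hct : (c : EReal) ≠ ⊤ := EReal.coe_ne_top c
  apply le_antisymm
  · rw [mul_comm, ← EReal.le_div_iff_mul_le hc0 hct]
    refine iSup_le fun i => ?_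
    rw [EReal.le_div_iff_mul_le hc0 hct, mul_comm]
    exact le_iSup (fun i => (c : EReal) * f i) i
  · refine iSup_le fun i => ?_
    calc (c : EReal) * f i = f i * c := mul_comm _ _
      _ ≤ (⨆ i, f i) * c := mul_le_mul_of_nonneg_right (le_iSup f i) hc0.le
      _ = (c : EReal) * ⨆ i, f i := mul_comm _ _

/-- Lemma 4 of the paper: `ζ_n(x,α) = α·ζ̂_n(x)` with `ζ̂_n(x) = ζ_n(x,1)`,
and `ζ̂_n = T̂ⁿ0` for the normalised optimal stopping operator `T̂`. -/
theorem capacity_scaling (S : Setup) (pc Kc xstar A : ℝ)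
    (hpc : 0 ≤ pc) (hKc : 0 ≤ Kc) (hxstar : xstar ∈ S.I)
    (hA : 0 < A) (hA1 : A < 1) :
    ∀ n : ℕ, ∀ x ∈ S.I, ∀ α : ℝ, 0 < α → α ≤ 1 →
      TopIter S pc Kc xstar A n x α
        = ((α : ℝ) : EReal) * TopIter S pc Kc xstar A n x 1 ∧
      TopIter S pc Kc xstar A n x 1 = ThatIter S pc Kc xstar A n x := by
  haveI : Nonempty S.Stop := ⟨S.never⟩
  have key : ∀ n : ℕ, ∀ x α : ℝ, 0 < α → α ≤ 1 →
      TopIter S pc Kc xstar A n x α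
        = ((α : ℝ) : EReal) * TopIter S pc Kc xstar A n x 1 ∧
      TopIter S pc Kc xstar A n x 1 = ThatIter S pc Kc xstar A n x := by
    intro n
    induction n with
    | zero =>
      intro x α hα hα1
      simp [TopIter, ThatIter]
    | succ n ih =>
      intro x α hα hα1
      have hA1' : (0 : ℝ) < A * 1 := by nlinarith
      have hA1'' : A * 1 ≤ 1 := by nlinarith
      have hAα : (0 : ℝ) < A * α := mul_pos hA hα
      have hAα1 : A * α ≤ 1 := by nlinarith
      set ζ := TopIter S pc Kc xstar A n with hζ
      have hsucc : ∀ y β : ℝ, TopIter S pc Kc xstar A (n + 1) y β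
          = ⨆ τ : S.Stop, S.E y τ
              (fun s => ((-(β * s) + β * pc : ℝ) : EReal) + hcont S Kc xstar A ζ s β) := by
        intro y β
        simp only [TopIter, Function.iterate_succ_apply', TwoArgOp, hζ]
      -- pointwise scaling of the integrand
      have hfun : (fun s => ((-(α * s) + α * pc : ℝ) : EReal) + hcont S Kc xstar A ζ s α)
          = fun s => ((α : ℝ) : EReal)
              * (((-(1 * s) + 1 * pc : ℝ) : EReal) + hcont S Kc xstar A ζ s 1) := by
        funext s
        simp only [hcont]
        split_ifs with h
        · rw [(ih xstar (A * α) hAα hAα1).1, (ih xstar (A * 1) hA1' hA1'').1]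
          have e1 : (-(α * s) + α * pc : ℝ) = α * (-(1 * s) + 1 * pc) := by ring
          have e2 : (α * Kc : ℝ) = α * (1 * Kc) := by ring
          have e3 : (A * α : ℝ) = (A * 1) * α := by ring
          rw [e1, e2, e3]
          exact ereal_scale_aux hα _ _ _ _ _
        · rw [(ih s (A * α) hAα hAα1).1, (ih s (A * 1) hA1' hA1'').1]
          have e1 : (-(α * s) + α * pc : ℝ) = α * (-(1 * s) + 1 * pc) := by ring
          have e2 : (α * Kc : ℝ) = α * (1 * Kc) := by ring
          have e3 : (A * α : ℝ) = (A * 1) * α := by ring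
          rw [e1, e2, e3]
          exact ereal_scale_aux2 hα _ _ _ _
      have h1 : TopIter S pc Kc xstar A (n + 1) x α
          = ((α : ℝ) : EReal) * TopIter S pc Kc xstar A (n + 1) x 1 := by
        rw [hsucc x α, hsucc x 1, hfun, ereal_mul_iSup hα]
        exact iSup_congr fun τ => S.E_smul x τ α _ hα.le
      have hfun2 : (fun s => ((-(1 * s) + 1 * pc : ℝ) : EReal) + hcont S Kc xstar A ζ s 1)
          = hhat S pc Kc xstar A (ThatIter S pc Kc xstar A n) := by
        funext s
        simp only [hcont, hhat]
        split_ifs with h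
        · rw [(ih xstar (A * 1) hA1' hA1'').1, (ih xstar 1 one_pos le_rfl).2]
          simp only [one_mul, mul_one, EReal.coe_mul]
        · rw [(ih s (A * 1) hA1' hA1'').1, (ih s 1 one_pos le_rfl).2]
          simp only [one_mul, mul_one, EReal.coe_mul]
          rw [EReal.coe_add, EReal.coe_add, add_assoc, add_assoc, EReal.coe_add, add_assoc]
      have h2 : TopIter S pc Kc xstar A (n + 1) x 1
          = ThatIter S pc Kc xstar A (n + 1) x := by
        rw [hsucc x 1, hfun2]
        simp only [ThatIter, Function.iterate_succ_apply', That]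
      exact ⟨h1, h2⟩
  intro n x _ α hα hα1
  exact key n x α hα hα1

end
end

section
/- Assume conditions S1* and S2* hold. Then exactly one of the following two regimes holds: (α) V̂(x) > V_c(x) for all x ≥ x*; or (β) V̂(x) = V_c(x) for all x ≥ x* (including the case that both are infinite for all x). Moreover, in regime (α), for every n > 0 the stopping problem T̂ζ̂_n (where ζ̂_n = T̂ⁿ0) admits an optimal stopping time, and so does the stopping problem T̂V̂: in each case there exists a maximiser x̂ ≤ x* of the relevant ratio ĥ(·,ζ̂)/φ_r such that τ_{x̂} is optimal for all initial states x ≥ x̂. -/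
open Filter Set Topology

noncomputable section

namespace TwoRegimesAux

lemma emul_left {c : ℝ} (hc : 0 ≤ c) {u v : EReal} (h : u ≤ v) :
    (c : EReal) * u ≤ (c : EReal) * v :=
  mul_le_mul_of_nonneg_left h (by exact_mod_cast hc)

lemma emul_right {c : ℝ} (hc : 0 ≤ c) {u v : EReal} (h : u ≤ v) :
    u * (c : EReal) ≤ v * (c : EReal) :=
  mul_le_mul_of_nonneg_right h (by exact_mod_cast hc)

lemma emul_cancel_aux {c : ℝ} (hc : c ≠ 0) (v : EReal) :
    v * (c : EReal) * ((c : EReal))⁻¹ = v := by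
  rw [mul_assoc]
  have : (c : EReal) * ((c : EReal))⁻¹ = (c : EReal) / (c : EReal) := rfl
  rw [this, EReal.div_self (EReal.coe_ne_bot c) (EReal.coe_ne_top c) (by exact_mod_cast hc),
    mul_one]

lemma emul_le_cancel {c : ℝ} (hc : 0 < c) {u v : EReal}
    (h : u * (c : EReal) ≤ v * (c : EReal)) : u ≤ v := by
  have h2 := emul_right (c := c⁻¹) (by positivity) h
  rw [EReal.coe_inv] at h2
  rwa [emul_cancel_aux hc.ne' u, emul_cancel_aux hc.ne' v] at h2

lemma emul_eq_cancel {c : ℝ} (hc : 0 < c) {u v : EReal}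
    (h : u * (c : EReal) = v * (c : EReal)) : u = v :=
  le_antisymm (emul_le_cancel hc h.le) (emul_le_cancel hc h.ge)

lemma emul_lt {c : ℝ} (hc : 0 < c) {u v : EReal} (h : u < v) :
    u * (c : EReal) < v * (c : EReal) :=
  lt_of_le_of_ne (emul_right hc.le h.le) (fun he => h.ne (emul_eq_cancel hc he))

lemma iSup_mul_coe {ι : Sort*} (f : ι → EReal) {c : ℝ} (hc : 0 < c) :
    (⨆ i, f i) * (c : EReal) = ⨆ i, f i * (c : EReal) := by
  have hc' : (0 : EReal) < (c : EReal) := by exact_mod_cast hc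
  have hct : (c : EReal) ≠ ⊤ := EReal.coe_ne_top c
  refine le_antisymm ?_ (iSup_le fun i => emul_right hc.le (le_iSup f i))
  refine (EReal.le_div_iff_mul_le hc' hct).mp
    (iSup_le fun i => (EReal.le_div_iff_mul_le hc' hct).mpr (le_iSup (fun j => f j * _) i))

section Main

variable (S : Setup) (pc Kc xstar A : ℝ)

/-- When the continuation value has the shape `ζ = m·φ` on `[x*,b)`, the payoff `ĥ(·,ζ)`
is `g·φ` where `g` is the following real-valued function. -/
def gfun (m : ℝ) (y : ℝ) : ℝ :=
  (if y < xstar then -y + pc + (Kc + A * m * S.phi xstar) * (S.psi y / S.psi xstar)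
   else -y + pc + Kc + A * m * S.phi y) / S.phi y

/-- The supremum of the ratio `ĥ(·,ζ)/φ` over the state space. -/
def MQ (ζ : ℝ → EReal) : EReal :=
  ⨆ y : {y : ℝ // y ∈ S.I}, hhat S pc Kc xstar A ζ y / ((S.phi y : ℝ) : EReal)

/-- `ζ` is a positive multiple of `φ` on `[x*, b)`. -/
def Shape (ζ : ℝ → EReal) (μ : EReal) : Prop :=
  ∀ x ∈ S.I, xstar ≤ x → ζ x = μ * ((S.phi x : ℝ) : EReal)

variable {S pc Kc xstar A}

lemma hhat_zero : hhat S pc Kc xstar A (fun _ => 0) = toE (hpay S pc Kc xstar) := by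
  funext y
  simp only [hhat, hpay, toE, mul_zero, add_zero]
  split
  · norm_cast; ring
  · norm_cast

lemma valc_eq (x : ℝ) :
    S.val (toE (hpay S pc Kc xstar)) x = ThatIter S pc Kc xstar A 1 x := by
  simp only [ThatIter, Function.iterate_one, That, Setup.val, hhat_zero]

lemma thatIter_succ (n : ℕ) :
    ThatIter S pc Kc xstar A (n + 1) = That S pc Kc xstar A (ThatIter S pc Kc xstar A n) := by
  simp only [ThatIter, Function.iterate_succ_apply']

lemma psi_ratio_nonneg (hxstar : xstar ∈ S.I) {y : ℝ} (hy : y ∈ S.I) :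
    0 ≤ S.psi y / S.psi xstar :=
  (div_pos (S.psi_pos hy.1 hy.2) (S.psi_pos hxstar.1 hxstar.2)).le

lemma hhat_mono (hxstar : xstar ∈ S.I) (hA : 0 ≤ A) {ζ ζ' : ℝ → EReal}
    (h : ∀ x, ζ x ≤ ζ' x) {y : ℝ} (hy : y ∈ S.I) :
    hhat S pc Kc xstar A ζ y ≤ hhat S pc Kc xstar A ζ' y := by
  rw [hhat, hhat]
  split
  · exact add_le_add le_rfl (emul_left (psi_ratio_nonneg hxstar hy)
      (add_le_add le_rfl (emul_left hA (h xstar))))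
  · exact add_le_add le_rfl (emul_left hA (h y))

lemma E_congr {x : ℝ} {τ : S.Stop} {ϑ ϑ' : ℝ → EReal} (h : ∀ s ∈ S.I, ϑ s = ϑ' s) :
    S.E x τ ϑ = S.E x τ ϑ' :=
  le_antisymm (S.E_mono x τ _ _ fun s h1 h2 => (h s ⟨h1, h2⟩).le)
    (S.E_mono x τ _ _ fun s h1 h2 => (h s ⟨h1, h2⟩).ge)

lemma That_mono (hxstar : xstar ∈ S.I) (hA : 0 ≤ A) {ζ ζ' : ℝ → EReal}
    (h : ∀ x, ζ x ≤ ζ' x) (x : ℝ) :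
    That S pc Kc xstar A ζ x ≤ That S pc Kc xstar A ζ' x :=
  iSup_mono fun τ => S.E_mono x τ _ _ fun s h1 h2 => hhat_mono hxstar hA h ⟨h1, h2⟩

lemma That_congr (hxstar : xstar ∈ S.I) {ζ ζ' : ℝ → EReal}
    (h : ∀ x ∈ S.I, xstar ≤ x → ζ x = ζ' x) (x : ℝ) :
    That S pc Kc xstar A ζ x = That S pc Kc xstar A ζ' x := by
  refine iSup_congr fun τ => E_congr fun s hs => ?_
  rw [hhat, hhat]
  split
  · rw [h xstar hxstar le_rfl]
  · next hlt => rw [h s hs (not_lt.mp hlt)]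

lemma thatIter_zero (x : ℝ) : ThatIter S pc Kc xstar A 0 x = 0 := rfl

lemma thatIter_nonneg (n : ℕ) (x : ℝ) : 0 ≤ ThatIter S pc Kc xstar A n x := by
  induction n generalizing x with
  | zero => exact le_rfl
  | succ n ih =>
    rw [thatIter_succ]
    show (0 : EReal) ≤ ⨆ τ : S.Stop, S.E x τ (hhat S pc Kc xstar A (ThatIter S pc Kc xstar A n))
    calc (0 : EReal) = S.E x S.never (hhat S pc Kc xstar A (ThatIter S pc Kc xstar A n)) :=
          (S.E_never x _).symm
      _ ≤ _ := le_iSup (fun τ => S.E x τ (hhat S pc Kc xstar A (ThatIter S pc Kc xstar A n)))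
          S.never

lemma thatIter_mono (hxstar : xstar ∈ S.I) (hA : 0 ≤ A) :
    ∀ n x, ThatIter S pc Kc xstar A n x ≤ ThatIter S pc Kc xstar A (n + 1) x := by
  intro n
  induction n with
  | zero => intro x; exact thatIter_nonneg 1 x
  | succ n ih =>
    intro x
    rw [thatIter_succ, thatIter_succ]
    exact That_mono hxstar hA ih x

lemma thatIter_mono_le (hxstar : xstar ∈ S.I) (hA : 0 ≤ A) {k l : ℕ} (h : k ≤ l) (x : ℝ) :
    ThatIter S pc Kc xstar A k x ≤ ThatIter S pc Kc xstar A l x :=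
  monotone_nat_of_le_succ (fun n => thatIter_mono hxstar hA n x) h

lemma shape_zero : Shape S xstar (fun _ => 0) 0 := fun x _ _ => (zero_mul _).symm

lemma shape_unique (hxstar : xstar ∈ S.I) {ζ : ℝ → EReal} {μ μ' : EReal}
    (h : Shape S xstar ζ μ) (h' : Shape S xstar ζ μ') : μ = μ' :=
  emul_eq_cancel (S.phi_pos hxstar.1 hxstar.2)
    ((h xstar hxstar le_rfl).symm.trans (h' xstar hxstar le_rfl))

lemma hhat_eq_g (hxstar : xstar ∈ S.I) {ζ : ℝ → EReal} {m : ℝ}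
    (hζ : Shape S xstar ζ ((m : ℝ) : EReal)) {y : ℝ} (hy : y ∈ S.I) :
    hhat S pc Kc xstar A ζ y = ((gfun S pc Kc xstar A m y * S.phi y : ℝ) : EReal) := by
  have hφ : S.phi y ≠ 0 := (S.phi_pos hy.1 hy.2).ne'
  rw [hhat, gfun]
  split
  · rw [hζ xstar hxstar le_rfl, div_mul_cancel₀ _ hφ, ← EReal.coe_mul]
    norm_cast
    ring
  · next hlt =>
    rw [hζ y hy (not_lt.mp hlt), div_mul_cancel₀ _ hφ, ← EReal.coe_mul]
    norm_cast
    ring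

lemma Qg (hxstar : xstar ∈ S.I) {ζ : ℝ → EReal} {m : ℝ}
    (hζ : Shape S xstar ζ ((m : ℝ) : EReal)) {y : ℝ} (hy : y ∈ S.I) :
    hhat S pc Kc xstar A ζ y / ((S.phi y : ℝ) : EReal) = ((gfun S pc Kc xstar A m y : ℝ) : EReal) := by
  rw [hhat_eq_g hxstar hζ hy, ← EReal.coe_div,
    mul_div_cancel_right₀ _ (S.phi_pos hy.1 hy.2).ne']

lemma hpay_le_gmul (hxstar : xstar ∈ S.I) (hA : 0 ≤ A) {m : ℝ} (hm : 0 ≤ m)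
    {y : ℝ} (hy : y ∈ S.I) :
    hpay S pc Kc xstar y ≤ gfun S pc Kc xstar A m y * S.phi y := by
  have hφ : 0 < S.phi y := S.phi_pos hy.1 hy.2
  have hφs : 0 < S.phi xstar := S.phi_pos hxstar.1 hxstar.2
  have hψr : 0 ≤ S.psi y / S.psi xstar := psi_ratio_nonneg hxstar hy
  rw [hpay, gfun, div_mul_cancel₀ _ hφ.ne']
  split
  · nlinarith [mul_nonneg (mul_nonneg (mul_nonneg hA hm) hφs.le) hψr]
  · nlinarith [mul_nonneg (mul_nonneg hA hm) hφ.le]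

lemma gfun_pos (hxstar : xstar ∈ S.I) (hA : 0 ≤ A) {m : ℝ} (hm : 0 ≤ m)
    {y : ℝ} (hy : y ∈ S.I) (hpos : 0 < hpay S pc Kc xstar y) :
    0 < gfun S pc Kc xstar A m y := by
  have hφ : 0 < S.phi y := S.phi_pos hy.1 hy.2
  have h1 : 0 < gfun S pc Kc xstar A m y * S.phi y :=
    lt_of_lt_of_le hpos (hpay_le_gmul hxstar hA hm hy)
  nlinarith

lemma g_le_xstar (hxstar : xstar ∈ S.I) (hS2 : pc + Kc < xstar) {m : ℝ}
    {y : ℝ} (hy : y ∈ S.I) (hyx : xstar ≤ y) :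
    gfun S pc Kc xstar A m y ≤ gfun S pc Kc xstar A m xstar := by
  have hφy : 0 < S.phi y := S.phi_pos hy.1 hy.2
  have hφs : 0 < S.phi xstar := S.phi_pos hxstar.1 hxstar.2
  have hanti : S.phi y ≤ S.phi xstar := by
    rcases eq_or_lt_of_le hyx with h | h
    · rw [h]
    · exact (S.phi_anti hxstar hy h).le
  rw [gfun, gfun, if_neg (not_lt.mpr hyx), if_neg (lt_irrefl xstar), div_le_div_iff₀ hφy hφs]
  have h1 : (pc + Kc - y) * S.phi xstar ≤ (pc + Kc - y) * S.phi y :=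
    mul_le_mul_of_nonpos_left hanti (by linarith)
  have h2 : (pc + Kc - y) * S.phi y ≤ (pc + Kc - xstar) * S.phi y :=
    mul_le_mul_of_nonneg_right (by linarith) hφy.le
  nlinarith

end Main

end TwoRegimesAux
namespace TwoRegimesAux
section Main2

variable {S : Setup} {pc Kc xstar A : ℝ}

lemma val_upper {ϑ : ℝ → EReal} {m : ℝ} (hm : 0 ≤ m)
    (hb : ∀ s ∈ S.I, ϑ s ≤ ((m * S.phi s : ℝ) : EReal)) {x : ℝ} (hx : x ∈ S.I) :
    S.val ϑ x ≤ ((m * S.phi x : ℝ) : EReal) := by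
  refine iSup_le fun τ => ?_
  calc S.E x τ ϑ ≤ S.E x τ (fun s => ((m : ℝ) : EReal) * ((S.phi s : ℝ) : EReal)) := by
        refine S.E_mono x τ _ _ fun s h1 h2 => ?_
        rw [← EReal.coe_mul]
        exact hb s ⟨h1, h2⟩
    _ = ((m : ℝ) : EReal) * S.E x τ (fun s => ((S.phi s : ℝ) : EReal)) :=
        S.E_smul x τ m _ hm
    _ ≤ ((m : ℝ) : EReal) * ((S.phi x : ℝ) : EReal) :=
        emul_left hm (S.phi_excessive hx.1 hx.2 τ)
    _ = ((m * S.phi x : ℝ) : EReal) := (EReal.coe_mul m (S.phi x)).symm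

lemma hhat_top (hxstar : xstar ∈ S.I) (hA0 : 0 < A) {ζ : ℝ → EReal}
    (hζ : Shape S xstar ζ ⊤) : hhat S pc Kc xstar A ζ xstar = ⊤ := by
  have hζtop : ζ xstar = ⊤ := by
    rw [hζ xstar hxstar le_rfl]
    exact EReal.top_mul_of_pos (by exact_mod_cast S.phi_pos hxstar.1 hxstar.2)
  rw [hhat, if_neg (lt_irrefl xstar), hζtop,
    EReal.mul_top_of_pos (by exact_mod_cast hA0),
    EReal.add_top_of_ne_bot (EReal.coe_ne_bot _)]

lemma MQ_top (hxstar : xstar ∈ S.I) (hA0 : 0 < A) {ζ : ℝ → EReal}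
    (hζ : Shape S xstar ζ ⊤) : MQ S pc Kc xstar A ζ = ⊤ := by
  refine top_le_iff.mp ?_
  have : hhat S pc Kc xstar A ζ xstar / ((S.phi xstar : ℝ) : EReal) = ⊤ := by
    rw [hhat_top hxstar hA0 hζ]
    exact EReal.top_div_of_pos_ne_top
      (by exact_mod_cast S.phi_pos hxstar.1 hxstar.2) (EReal.coe_ne_top _)
  calc (⊤ : EReal) = _ := this.symm
    _ ≤ _ := le_iSup (fun y : {y : ℝ // y ∈ S.I} =>
        hhat S pc Kc xstar A ζ y / ((S.phi y : ℝ) : EReal)) ⟨xstar, hxstar⟩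

lemma MQ_nonneg (hxstar : xstar ∈ S.I) (hA0 : 0 < A)
    (hS1 : ∃ y ∈ S.I, 0 < hpay S pc Kc xstar y) {ζ : ℝ → EReal} {μ : EReal}
    (hμ : 0 ≤ μ) (hζ : Shape S xstar ζ μ) : 0 ≤ MQ S pc Kc xstar A ζ := by
  obtain ⟨y₁, hy₁I, hy₁⟩ := hS1
  induction μ with
  | bot => exact absurd hμ (by simp)
  | coe m =>
    have hm : 0 ≤ m := by exact_mod_cast hμ
    have := gfun_pos hxstar hA0.le hm hy₁I hy₁
    calc (0 : EReal) ≤ ((gfun S pc Kc xstar A m y₁ : ℝ) : EReal) := by exact_mod_cast this.le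
      _ = hhat S pc Kc xstar A ζ y₁ / ((S.phi y₁ : ℝ) : EReal) := (Qg hxstar hζ hy₁I).symm
      _ ≤ _ := le_iSup (fun y : {y : ℝ // y ∈ S.I} =>
          hhat S pc Kc xstar A ζ y / ((S.phi y : ℝ) : EReal)) ⟨y₁, hy₁I⟩
  | top => rw [MQ_top hxstar hA0 hζ]; exact le_top

/-- The key computation: if `ζ` has shape `μ·φ` on `[x*,b)` then `T̂ζ` has shape
`(sup ĥ(·,ζ)/φ)·φ` there. -/
lemma that_shape (hxstar : xstar ∈ S.I) (hA0 : 0 < A)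
    (hS1 : ∃ y ∈ S.I, 0 < hpay S pc Kc xstar y) (hS2 : pc + Kc < xstar)
    {ζ : ℝ → EReal} {μ : EReal} (hμ : 0 ≤ μ) (hζ : Shape S xstar ζ μ) :
    Shape S xstar (That S pc Kc xstar A ζ) (MQ S pc Kc xstar A ζ) := by
  intro x hx hxx
  have hφx : 0 < S.phi x := S.phi_pos hx.1 hx.2
  induction μ with
  | bot => exact absurd hμ (by simp)
  | top =>
    rw [MQ_top hxstar hA0 hζ, EReal.top_mul_of_pos (by exact_mod_cast hφx)]
    refine top_le_iff.mp ?_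
    have hE : S.E x (S.hit xstar) (hhat S pc Kc xstar A ζ) = ⊤ := by
      rw [S.E_hit_ge hxstar.1 hx.2 hxx, hhat_top hxstar hA0 hζ]
      refine EReal.top_mul_of_pos ?_
      exact_mod_cast div_pos hφx (S.phi_pos hxstar.1 hxstar.2)
    calc (⊤ : EReal) = _ := hE.symm
      _ ≤ _ := le_iSup (fun τ => S.E x τ (hhat S pc Kc xstar A ζ)) (S.hit xstar)
  | coe m =>
    have hm : 0 ≤ m := by exact_mod_cast hμ
    obtain ⟨y₁, hy₁I, hy₁⟩ := hS1
    have hg₁ : 0 < gfun S pc Kc xstar A m y₁ := gfun_pos hxstar hA0.le hm hy₁I hy₁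
    -- the sup is attained on `(a, x]`
    have hMQx : MQ S pc Kc xstar A ζ
        = ⨆ y : {y : ℝ // y ∈ S.I ∧ y ≤ x}, ((gfun S pc Kc xstar A m y : ℝ) : EReal) := by
      refine le_antisymm (iSup_le ?_) (iSup_le ?_)
      · rintro ⟨y, hyI⟩
        rw [Qg hxstar hζ hyI]
        by_cases hyx : y ≤ x
        · exact le_iSup_of_le ⟨y, hyI, hyx⟩ le_rfl
        · have : gfun S pc Kc xstar A m y ≤ gfun S pc Kc xstar A m xstar :=
            g_le_xstar hxstar hS2 hyI (le_trans hxx (not_le.mp hyx).le)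
          exact le_iSup_of_le ⟨xstar, hxstar, hxx⟩ (by exact_mod_cast this)
      · rintro ⟨y, hyI, hyx⟩
        rw [← Qg hxstar hζ hyI]
        exact le_iSup (fun z : {y : ℝ // y ∈ S.I} =>
          hhat S pc Kc xstar A ζ z / ((S.phi z : ℝ) : EReal)) ⟨y, hyI⟩
    refine le_antisymm ?_ ?_
    · -- upper bound
      rcases eq_top_or_lt_top (MQ S pc Kc xstar A ζ) with htop | hlt
      · rw [htop, EReal.top_mul_of_pos (by exact_mod_cast hφx)]; exact le_top
      · have hne : MQ S pc Kc xstar A ζ ≠ ⊥ := by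
          refine ne_bot_of_le_ne_bot ?_
            (MQ_nonneg hxstar hA0 ⟨y₁, hy₁I, hy₁⟩ hμ hζ)
          simp
        lift MQ S pc Kc xstar A ζ to ℝ using ⟨hlt.ne, hne⟩ with M hM
        have hM0 : 0 ≤ M := by
          have := MQ_nonneg hxstar hA0 ⟨y₁, hy₁I, hy₁⟩ hμ hζ
          rw [← hM] at this; exact_mod_cast this
        have hgM : ∀ y ∈ S.I, gfun S pc Kc xstar A m y ≤ M := by
          intro y hyI
          have : hhat S pc Kc xstar A ζ y / ((S.phi y : ℝ) : EReal)
              ≤ ((M : ℝ) : EReal) := by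
            rw [hM]
            exact le_iSup (fun z : {y : ℝ // y ∈ S.I} =>
              hhat S pc Kc xstar A ζ z / ((S.phi z : ℝ) : EReal)) ⟨y, hyI⟩
          rw [Qg hxstar hζ hyI] at this
          exact_mod_cast this
        have := val_upper (S := S) (ϑ := hhat S pc Kc xstar A ζ) hM0 (fun s hs => by
          rw [hhat_eq_g hxstar hζ hs]
          exact_mod_cast mul_le_mul_of_nonneg_right (hgM s hs)
            (S.phi_pos hs.1 hs.2).le) hx
        calc That S pc Kc xstar A ζ x ≤ ((M * S.phi x : ℝ) : EReal) := this
          _ = ((M : ℝ) : EReal) * ((S.phi x : ℝ) : EReal) := EReal.coe_mul _ _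
    · -- lower bound via hitting times
      rw [hMQx, iSup_mul_coe _ hφx]
      refine iSup_le ?_
      rintro ⟨y, hyI, hyx⟩
      have hφy : 0 < S.phi y := S.phi_pos hyI.1 hyI.2
      have hE : S.E x (S.hit y) (hhat S pc Kc xstar A ζ)
          = ((gfun S pc Kc xstar A m y : ℝ) : EReal) * ((S.phi x : ℝ) : EReal) := by
        rw [S.E_hit_ge hyI.1 hx.2 hyx, hhat_eq_g hxstar hζ hyI, ← EReal.coe_mul,
          ← EReal.coe_mul]
        norm_cast
        field_simp
      calc ((gfun S pc Kc xstar A m y : ℝ) : EReal) * ((S.phi x : ℝ) : EReal)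
          = S.E x (S.hit y) (hhat S pc Kc xstar A ζ) := hE.symm
        _ ≤ _ := le_iSup (fun τ => S.E x τ (hhat S pc Kc xstar A ζ)) (S.hit y)

lemma shape_exists (hxstar : xstar ∈ S.I) (hA0 : 0 < A)
    (hS1 : ∃ y ∈ S.I, 0 < hpay S pc Kc xstar y) (hS2 : pc + Kc < xstar) :
    ∀ n : ℕ, ∃ μ : EReal, 0 ≤ μ ∧ Shape S xstar (ThatIter S pc Kc xstar A n) μ := by
  intro n
  induction n with
  | zero => exact ⟨0, le_rfl, shape_zero⟩
  | succ n ih =>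
    obtain ⟨μ, hμ, hsh⟩ := ih
    refine ⟨MQ S pc Kc xstar A (ThatIter S pc Kc xstar A n),
      MQ_nonneg hxstar hA0 hS1 hμ hsh, ?_⟩
    rw [thatIter_succ]
    exact that_shape hxstar hA0 hS1 hS2 hμ hsh

end Main2
end TwoRegimesAux
namespace TwoRegimesAux
section Main3

variable {S : Setup} {pc Kc xstar A : ℝ}

lemma eventually_fromRight (hxstar : xstar ∈ S.I) :
    ∀ᶠ y in fromRight S.a, y ∈ S.I ∧ y < xstar := by
  have hmem : Set.Ioi S.a ∩ Set.Iio ((xstar : ℝ) : EReal)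
      ∈ nhdsWithin S.a (Set.Ioi S.a) :=
    Filter.inter_mem self_mem_nhdsWithin (nhdsWithin_le_nhds (isOpen_Iio.mem_nhds hxstar.1))
  refine Filter.eventually_of_mem (Filter.preimage_mem_comap hmem) ?_
  intro y hy
  have h1 : S.a < (y : EReal) := hy.1
  have h2 : (y : EReal) < ((xstar : ℝ) : EReal) := hy.2
  exact ⟨⟨h1, lt_trans h2 hxstar.2⟩, EReal.coe_lt_coe_iff.mp h2⟩

lemma Lc_le_MQ0 (hxstar : xstar ∈ S.I) (hpc : 0 ≤ pc) (hKc : 0 ≤ Kc) :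
    S.Lc ≤ MQ S pc Kc xstar A (fun _ => 0) := by
  refine Filter.limsup_le_of_le (by isBoundedDefault) ?_
  refine (eventually_fromRight hxstar).mono fun y hy => ?_
  obtain ⟨hyI, hylt⟩ := hy
  have hφ : 0 < S.phi y := S.phi_pos hyI.1 hyI.2
  have h1 : -y / S.phi y ≤ hpay S pc Kc xstar y / S.phi y := by
    gcongr
    rw [hpay, if_pos hylt]
    have h2 : 0 ≤ Kc * (S.psi y / S.psi xstar) :=
      mul_nonneg hKc (psi_ratio_nonneg hxstar hyI)
    linarith
  calc ((-y / S.phi y : ℝ) : EReal) ≤ ((hpay S pc Kc xstar y / S.phi y : ℝ) : EReal) := by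
        exact_mod_cast h1
    _ = hhat S pc Kc xstar A (fun _ => 0) y / ((S.phi y : ℝ) : EReal) := by
        rw [hhat_zero]; exact EReal.coe_div _ _
    _ ≤ _ := le_iSup (fun z : {y : ℝ // y ∈ S.I} =>
        hhat S pc Kc xstar A (fun _ => 0) z / ((S.phi z : ℝ) : EReal)) ⟨y, hyI⟩

lemma g_cont (hxstar : xstar ∈ S.I) (m : ℝ) :
    ContinuousOn (gfun S pc Kc xstar A m) {y : ℝ | S.a < ↑y ∧ y ≤ xstar} := by
  have hDI : {y : ℝ | S.a < ↑y ∧ y ≤ xstar} ⊆ S.I := fun y hy =>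
    ⟨hy.1, lt_of_le_of_lt (show (y : EReal) ≤ ((xstar : ℝ) : EReal) from
      EReal.coe_le_coe_iff.mpr hy.2) hxstar.2⟩
  have hψs : S.psi xstar ≠ 0 := (S.psi_pos hxstar.1 hxstar.2).ne'
  have heq : ∀ y ∈ {y : ℝ | S.a < ↑y ∧ y ≤ xstar}, gfun S pc Kc xstar A m y
      = (-y + pc + (Kc + A * m * S.phi xstar) * (S.psi y / S.psi xstar)) / S.phi y := by
    intro y hy
    rcases lt_or_eq_of_le hy.2 with h | h
    · rw [gfun, if_pos h]
    · subst h
      rw [gfun, if_neg (lt_irrefl _), div_self hψs, mul_one]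
      ring_nf
  refine ContinuousOn.congr ?_ heq
  refine ContinuousOn.div ?_ (S.phi_cont.mono hDI)
    (fun y hy => (S.phi_pos (hDI hy).1 (hDI hy).2).ne')
  exact ((continuous_id.neg.continuousOn.add continuousOn_const).add
    (continuousOn_const.mul ((S.psi_cont.mono hDI).div_const _)))

lemma MQ_mono (hxstar : xstar ∈ S.I) (hA : 0 ≤ A) {ζ ζ' : ℝ → EReal}
    (h : ∀ x, ζ x ≤ ζ' x) : MQ S pc Kc xstar A ζ ≤ MQ S pc Kc xstar A ζ' :=
  iSup_mono fun y => EReal.div_le_div_right_of_nonneg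
    (by exact_mod_cast (S.phi_pos y.2.1 y.2.2).le) (hhat_mono hxstar hA h y.2)

lemma maximizer_top (hxstar : xstar ∈ S.I) (hA0 : 0 < A) {ζ : ℝ → EReal}
    (hζ : Shape S xstar ζ ⊤) :
    ∃ xhat ∈ S.I, xhat ≤ xstar ∧
      (∀ y ∈ S.I, hhat S pc Kc xstar A ζ y / ((S.phi y : ℝ) : EReal)
        ≤ hhat S pc Kc xstar A ζ xhat / ((S.phi xhat : ℝ) : EReal)) ∧
      ∀ x ∈ S.I, xhat ≤ x → S.IsOptimal (hhat S pc Kc xstar A ζ) x (S.hit xhat) := by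
  have hhtop := hhat_top (pc := pc) (Kc := Kc) hxstar hA0 hζ
  refine ⟨xstar, hxstar, le_rfl, ?_, ?_⟩
  · intro y hy
    rw [hhtop, EReal.top_div_of_pos_ne_top
      (by exact_mod_cast S.phi_pos hxstar.1 hxstar.2) (EReal.coe_ne_top _)]
    exact le_top
  · intro x hxI hxx
    have hE : S.E x (S.hit xstar) (hhat S pc Kc xstar A ζ) = ⊤ := by
      rw [S.E_hit_ge hxstar.1 hxI.2 hxx, hhtop]
      exact EReal.top_mul_of_pos
        (by exact_mod_cast div_pos (S.phi_pos hxI.1 hxI.2) (S.phi_pos hxstar.1 hxstar.2))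
    refine le_antisymm (le_iSup (fun τ => S.E x τ (hhat S pc Kc xstar A ζ)) (S.hit xstar)) ?_
    rw [hE]
    exact le_top

lemma maximizer (hxstar : xstar ∈ S.I) (hA0 : 0 < A) (hpc : 0 ≤ pc) (hKc : 0 ≤ Kc)
    (hS1 : ∃ y ∈ S.I, 0 < hpay S pc Kc xstar y) (hS2 : pc + Kc < xstar)
    {ζ : ℝ → EReal} {m : ℝ} (hm : 0 ≤ m) (hζ : Shape S xstar ζ ((m : ℝ) : EReal))
    (hLc : S.Lc < MQ S pc Kc xstar A ζ) :
    ∃ xhat ∈ S.I, xhat ≤ xstar ∧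
      (∀ y ∈ S.I, hhat S pc Kc xstar A ζ y / ((S.phi y : ℝ) : EReal)
        ≤ hhat S pc Kc xstar A ζ xhat / ((S.phi xhat : ℝ) : EReal)) ∧
      ∀ x ∈ S.I, xhat ≤ x → S.IsOptimal (hhat S pc Kc xstar A ζ) x (S.hit xhat) := by
  obtain ⟨y₁, hy₁I, hy₁⟩ := hS1
  obtain ⟨r₁, hr₁l, hr₁r⟩ := EReal.exists_between_coe_real hLc
  obtain ⟨r₂, hr₂l, hr₂r⟩ := EReal.exists_between_coe_real hr₁r
  have hr12 : r₁ < r₂ := by exact_mod_cast hr₂l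
  set C := Kc + A * m * S.phi xstar with hC
  have ev1 : ∀ᶠ y in fromRight S.a, ((-y / S.phi y : ℝ) : EReal) < ((r₁ : ℝ) : EReal) :=
    Filter.eventually_lt_of_limsup_lt hr₁l
  have tend : Filter.Tendsto (fun y => (pc + C * (S.psi y / S.psi xstar)) * (S.phi y)⁻¹)
      (fromRight S.a) (nhds 0) := by
    have h1 : Filter.Tendsto (fun y => pc + C * (S.psi y / S.psi xstar)) (fromRight S.a)
        (nhds (pc + C * (0 / S.psi xstar))) :=
      (((S.psi_lim_a).div_const _).const_mul _).const_add _
    have h2 : Filter.Tendsto (fun y => (S.phi y)⁻¹) (fromRight S.a) (nhds 0) :=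
      S.phi_lim_a.inv_tendsto_atTop
    have h3 := h1.mul h2
    simpa using h3
  have ev2 : ∀ᶠ y in fromRight S.a,
      (pc + C * (S.psi y / S.psi xstar)) * (S.phi y)⁻¹ < r₂ - r₁ :=
    tend.eventually_lt_const (by linarith)
  have ev3 := eventually_fromRight (S := S) hxstar
  have ev : ∀ᶠ y in fromRight S.a, (y ∈ S.I ∧ y < xstar) ∧ gfun S pc Kc xstar A m y < r₂ := by
    filter_upwards [ev1, ev2, ev3] with y h1 h2 h3
    refine ⟨h3, ?_⟩
    have hφ : 0 < S.phi y := S.phi_pos h3.1.1 h3.1.2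
    have h1' : -y / S.phi y < r₁ := by exact_mod_cast h1
    have hgy : gfun S pc Kc xstar A m y
        = -y / S.phi y + (pc + C * (S.psi y / S.psi xstar)) * (S.phi y)⁻¹ := by
      rw [gfun, if_pos h3.2, ← hC]
      field_simp
      ring
    rw [hgy]
    linarith
  obtain ⟨T, hT, hTsub⟩ := Filter.mem_comap.mp ev
  obtain ⟨u, hu, huT⟩ :=
    (mem_nhdsGT_iff_exists_Ioo_subset' (hxstar.1 : S.a < ((xstar : ℝ) : EReal))).mp hT
  have hmin : S.a < min u ((xstar : ℝ) : EReal) := lt_min hu hxstar.1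
  obtain ⟨w, hw1, hw2⟩ := EReal.exists_between_coe_real hmin
  have hwu : ((w : ℝ) : EReal) < u := lt_of_lt_of_le hw2 (min_le_left _ _)
  have hwx : w < xstar := by
    have := lt_of_lt_of_le hw2 (min_le_right _ _)
    exact_mod_cast this
  have hsmall : ∀ y : ℝ, S.a < (y : EReal) → y < w → gfun S pc Kc xstar A m y < r₂ := by
    intro y hy1 hy2
    have hyIoo : (y : EReal) ∈ Set.Ioo S.a u :=
      ⟨hy1, lt_trans (EReal.coe_lt_coe_iff.mpr hy2) hwu⟩
    exact (hTsub (huT hyIoo)).2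
  have hsub : Set.Icc w xstar ⊆ {y : ℝ | S.a < ↑y ∧ y ≤ xstar} := fun y hy =>
    ⟨lt_of_lt_of_le hw1 (EReal.coe_le_coe_iff.mpr hy.1), hy.2⟩
  obtain ⟨xh, hxhmem, hxhmax⟩ := isCompact_Icc.exists_isMaxOn (Set.nonempty_Icc.mpr hwx.le)
    ((g_cont hxstar m).mono hsub)
  have hxhI : xh ∈ S.I :=
    ⟨(hsub hxhmem).1, lt_of_le_of_lt (EReal.coe_le_coe_iff.mpr hxhmem.2) hxstar.2⟩
  obtain ⟨⟨y₀, hy₀I⟩, hy₀⟩ := lt_iSup_iff.mp hr₂r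
  rw [Qg hxstar hζ hy₀I] at hy₀
  have hy₀' : r₂ < gfun S pc Kc xstar A m y₀ := by exact_mod_cast hy₀
  have hr2xh : r₂ < gfun S pc Kc xstar A m xh := by
    rcases le_or_gt y₀ xstar with h | h
    · rcases le_or_gt w y₀ with h' | h'
      · exact lt_of_lt_of_le hy₀' (hxhmax ⟨h', h⟩)
      · exact absurd (hsmall y₀ hy₀I.1 h') (not_lt.mpr hy₀'.le)
    · exact lt_of_lt_of_le hy₀' (le_trans (g_le_xstar hxstar hS2 hy₀I h.le)
        (hxhmax ⟨hwx.le, le_rfl⟩))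
  have hgmax : ∀ y ∈ S.I, gfun S pc Kc xstar A m y ≤ gfun S pc Kc xstar A m xh := by
    intro y hyI
    rcases le_or_gt y xstar with h | h
    · rcases le_or_gt w y with h' | h'
      · exact hxhmax ⟨h', h⟩
      · exact le_trans (hsmall y hyI.1 h').le hr2xh.le
    · exact le_trans (g_le_xstar hxstar hS2 hyI h.le) (hxhmax ⟨hwx.le, le_rfl⟩)
  have hgxh_pos : 0 < gfun S pc Kc xstar A m xh :=
    lt_of_lt_of_le (gfun_pos hxstar hA0.le hm hy₁I hy₁) (hgmax y₁ hy₁I)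
  refine ⟨xh, hxhI, hxhmem.2, ?_, ?_⟩
  · intro y hyI
    rw [Qg hxstar hζ hyI, Qg hxstar hζ hxhI]
    exact_mod_cast hgmax y hyI
  · intro x hxI hxhx
    have hφxh : 0 < S.phi xh := S.phi_pos hxhI.1 hxhI.2
    have hEx : S.E x (S.hit xh) (hhat S pc Kc xstar A ζ)
        = ((gfun S pc Kc xstar A m xh * S.phi x : ℝ) : EReal) := by
      rw [S.E_hit_ge hxhI.1 hxI.2 hxhx, hhat_eq_g hxstar hζ hxhI, ← EReal.coe_mul]
      norm_cast
      field_simp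
    have hub := val_upper (S := S) (ϑ := hhat S pc Kc xstar A ζ) hgxh_pos.le
      (fun s hs => by
        rw [hhat_eq_g hxstar hζ hs]
        exact_mod_cast mul_le_mul_of_nonneg_right (hgmax s hs) (S.phi_pos hs.1 hs.2).le) hxI
    refine le_antisymm (le_iSup (fun τ => S.E x τ (hhat S pc Kc xstar A ζ)) (S.hit xh)) ?_
    rw [hEx]
    exact hub

lemma iter_const (hxstar : xstar ∈ S.I)
    (h12 : ∀ x ∈ S.I, xstar ≤ x →
      ThatIter S pc Kc xstar A 2 x = ThatIter S pc Kc xstar A 1 x) :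
    ∀ n : ℕ, ∀ x ∈ S.I, xstar ≤ x →
      ThatIter S pc Kc xstar A (n + 1) x = ThatIter S pc Kc xstar A 1 x := by
  intro n
  induction n with
  | zero => intro x _ _; rfl
  | succ n ih =>
    intro x hx hxx
    have key : ThatIter S pc Kc xstar A (n + 2) x = ThatIter S pc Kc xstar A 2 x := by
      have e1 : ThatIter S pc Kc xstar A (n + 2)
          = That S pc Kc xstar A (ThatIter S pc Kc xstar A (n + 1)) := thatIter_succ (n + 1)
      have e2 : ThatIter S pc Kc xstar A 2
          = That S pc Kc xstar A (ThatIter S pc Kc xstar A 1) := thatIter_succ 1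
      rw [e1, e2]
      exact That_congr hxstar (fun z hz hzz => ih z hz hzz) x
    rw [key]
    exact h12 x hx hxx

end Main3
end TwoRegimesAux
/-- Theorem 2 of the paper: exactly one of regimes (α) and (β) holds;
moreover in regime (α) the problems `T̂ζ̂_n` (`n > 0`) and `T̂V̂` admit optimal stopping times of
threshold type: a maximiser `x̂ ≤ x*` of `ĥ(·,ζ̂)/φ_r` such that `τ_x̂` is optimal for `x ≥ x̂`. -/
theorem two_regimes (S : Setup) (pc Kc xstar A : ℝ)
    (hpc : 0 ≤ pc) (hKc : 0 ≤ Kc) (hxstar : xstar ∈ S.I)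
    (hA0 : 0 < A) (hA1 : A < 1)
    (hS1 : ∃ x ∈ S.I, 0 < hpay S pc Kc xstar x)
    (hS2 : pc + Kc < xstar) :
    -- exactly one regime holds
    ((regimeAlpha S pc Kc xstar A ∧ ¬ regimeBeta S pc Kc xstar A) ∨
     (¬ regimeAlpha S pc Kc xstar A ∧ regimeBeta S pc Kc xstar A)) ∧
    -- in regime (α): optimal stopping times exist for T̂ζ̂_n, n > 0, ...
    (regimeAlpha S pc Kc xstar A →
      (∀ n : ℕ, 0 < n →
        ∃ xhat ∈ S.I, xhat ≤ xstar ∧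
          (∀ y ∈ S.I,
            hhat S pc Kc xstar A (ThatIter S pc Kc xstar A n) y / ((S.phi y : ℝ) : EReal)
              ≤ hhat S pc Kc xstar A (ThatIter S pc Kc xstar A n) xhat
                  / ((S.phi xhat : ℝ) : EReal)) ∧
          ∀ x ∈ S.I, xhat ≤ x →
            S.IsOptimal (hhat S pc Kc xstar A (ThatIter S pc Kc xstar A n)) x (S.hit xhat)) ∧
      -- ... and for T̂V̂
      (∃ xhat ∈ S.I, xhat ≤ xstar ∧
        (∀ y ∈ S.I,
          hhat S pc Kc xstar A (Vhat S pc Kc xstar A) y / ((S.phi y : ℝ) : EReal)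
            ≤ hhat S pc Kc xstar A (Vhat S pc Kc xstar A) xhat / ((S.phi xhat : ℝ) : EReal)) ∧
        ∀ x ∈ S.I, xhat ≤ x →
          S.IsOptimal (hhat S pc Kc xstar A (Vhat S pc Kc xstar A)) x (S.hit xhat))) := by

  classical
  open TwoRegimesAux in
  have hφs : 0 < S.phi xstar := S.phi_pos hxstar.1 hxstar.2
  have hsh := shape_exists hxstar hA0 hS1 hS2
  set μseq : ℕ → EReal := fun n => (hsh n).choose with hμseqdef
  have hμn : ∀ n, 0 ≤ μseq n ∧ Shape S xstar (ThatIter S pc Kc xstar A n) (μseq n) :=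
    fun n => (hsh n).choose_spec
  have hVsh : Shape S xstar (Vhat S pc Kc xstar A) (⨆ n, μseq n) := by
    intro x hx hxx
    have hφx : 0 < S.phi x := S.phi_pos hx.1 hx.2
    rw [Vhat, iSup_mul_coe _ hφx]
    exact iSup_congr fun n => (hμn n).2 x hx hxx
  have hVnonneg : (0 : EReal) ≤ ⨆ n, μseq n := le_trans (hμn 0).1 (le_iSup _ 0)
  have hle : μseq 1 ≤ ⨆ n, μseq n := le_iSup _ 1
  have hdico : regimeAlpha S pc Kc xstar A ∨ regimeBeta S pc Kc xstar A := by
    rcases lt_or_eq_of_le hle with hlt | heq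
    · left
      intro x hx hxx
      rw [valc_eq (A := A) x, (hμn 1).2 x hx hxx, hVsh x hx hxx]
      exact emul_lt (S.phi_pos hx.1 hx.2) hlt
    · right
      intro x hx hxx
      rw [valc_eq (A := A) x, (hμn 1).2 x hx hxx, hVsh x hx hxx, heq]
  have hnotboth : ¬ (regimeAlpha S pc Kc xstar A ∧ regimeBeta S pc Kc xstar A) :=
    fun ⟨ha, hb⟩ => (ha xstar hxstar le_rfl).ne' (hb xstar hxstar le_rfl)
  constructor
  · rcases hdico with h | h
    · exact Or.inl ⟨h, fun hb => hnotboth ⟨h, hb⟩⟩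
    · exact Or.inr ⟨fun ha => hnotboth ⟨ha, h⟩, h⟩
  · intro halpha
    have hμmono : ∀ k l : ℕ, k ≤ l → μseq k ≤ μseq l := by
      intro k l hkl
      refine emul_le_cancel hφs ?_
      rw [← (hμn k).2 xstar hxstar le_rfl, ← (hμn l).2 xstar hxstar le_rfl]
      exact thatIter_mono_le hxstar hA0.le hkl xstar
    have h12 : μseq 1 < μseq 2 := by
      rcases lt_or_eq_of_le (hμmono 1 2 one_le_two) with h | h
      · exact h
      exfalso
      have hiter := iter_const hxstar (fun x hx hxx => by
        rw [(hμn 2).2 x hx hxx, (hμn 1).2 x hx hxx, ← h])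
      have hbeta : regimeBeta S pc Kc xstar A := by
        intro x hx hxx
        rw [valc_eq (A := A) x, Vhat]
        refine le_antisymm (iSup_le fun n => ?_)
          (le_iSup (fun n => ThatIter S pc Kc xstar A n x) 1)
        cases n with
        | zero => exact thatIter_mono hxstar hA0.le 0 x
        | succ n => rw [hiter n x hx hxx]
      exact hnotboth ⟨halpha, hbeta⟩
    have hμ1MQ : μseq 1 = MQ S pc Kc xstar A (fun _ => 0) := by
      refine shape_unique hxstar (hμn 1).2 ?_
      have hthis := that_shape (A := A) hxstar hA0 hS1 hS2 le_rfl shape_zero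
      intro x hx hxx
      exact hthis x hx hxx
    have hLc1 : S.Lc ≤ μseq 1 := by
      rw [hμ1MQ]
      exact Lc_le_MQ0 hxstar hpc hKc
    have hMQiter : ∀ n : ℕ, MQ S pc Kc xstar A (ThatIter S pc Kc xstar A n) = μseq (n + 1) := by
      intro n
      refine shape_unique hxstar ?_ (hμn (n + 1)).2
      rw [thatIter_succ]
      exact that_shape hxstar hA0 hS1 hS2 (hμn n).1 (hμn n).2
    have key : ∀ (ζ : ℝ → EReal) (μ : EReal), 0 ≤ μ → Shape S xstar ζ μ →
        μseq 2 ≤ MQ S pc Kc xstar A ζ →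
        ∃ xhat ∈ S.I, xhat ≤ xstar ∧
          (∀ y ∈ S.I, hhat S pc Kc xstar A ζ y / ((S.phi y : ℝ) : EReal)
            ≤ hhat S pc Kc xstar A ζ xhat / ((S.phi xhat : ℝ) : EReal)) ∧
          ∀ x ∈ S.I, xhat ≤ x → S.IsOptimal (hhat S pc Kc xstar A ζ) x (S.hit xhat) := by
      intro ζ μ hμ hshζ hMQ2
      have hLcMQ : S.Lc < MQ S pc Kc xstar A ζ :=
        lt_of_le_of_lt hLc1 (lt_of_lt_of_le h12 hMQ2)
      induction μ with
      | bot => exact absurd hμ (by simp)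
      | coe m =>
        exact maximizer hxstar hA0 hpc hKc hS1 hS2 (by exact_mod_cast hμ) hshζ hLcMQ
      | top => exact maximizer_top hxstar hA0 hshζ
    constructor
    · intro n hn
      refine key _ _ (hμn n).1 (hμn n).2 ?_
      rw [hMQiter n]
      exact hμmono 2 (n + 1) (by omega)
    · refine key _ _ hVnonneg hVsh ?_
      calc μseq 2 = MQ S pc Kc xstar A (ThatIter S pc Kc xstar A 1) := (hMQiter 1).symm
        _ ≤ _ := MQ_mono hxstar hA0.le
            (fun x => le_iSup (fun n => ThatIter S pc Kc xstar A n x) 1)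


end
end

section
/- Assume conditions S1* and S2* hold. Then regime (β), i.e. V̂(x) = V_c(x) for all x ≥ x* (or both infinite), holds if and only if T̂²0(x) = T̂0(x) for all x ≥ x*. -/
open Filter Set Topology

noncomputable section

section Aux

variable (S : Setup) (pc Kc xstar A : ℝ)

lemma hhat_zero : hhat S pc Kc xstar A (fun _ => 0) = toE (hpay S pc Kc xstar) := by
  funext x
  unfold hhat toE hpay
  split
  · rw [mul_zero, add_zero, EReal.mul_comm, ← EReal.coe_mul, ← EReal.coe_add]
  · rw [mul_zero, add_zero]

lemma ThatIter_one : ThatIter S pc Kc xstar A 1 = S.val (toE (hpay S pc Kc xstar)) := by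
  funext x
  simp only [ThatIter, Function.iterate_one, That, hhat_zero, Setup.val]

lemma That_mono (hxstar : xstar ∈ S.I) (hA0 : 0 ≤ A) {ζ ζ' : ℝ → EReal}
    (h : ∀ s, ζ s ≤ ζ' s) (x : ℝ) :
    That S pc Kc xstar A ζ x ≤ That S pc Kc xstar A ζ' x := by
  refine iSup_mono fun τ => S.E_mono x τ _ _ fun s hs1 hs2 => ?_
  have hA : (0 : EReal) ≤ (A : EReal) := by exact_mod_cast hA0
  unfold hhat
  split
  · refine add_le_add_right (mul_le_mul_of_nonneg_left (add_le_add_right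
      (mul_le_mul_of_nonneg_left (h xstar) hA) _) ?_) _
    have h1 : 0 < S.psi s := S.psi_pos hs1 hs2
    have h2 : 0 < S.psi xstar := S.psi_pos hxstar.1 hxstar.2
    have : (0:ℝ) ≤ S.psi s / S.psi xstar := le_of_lt (div_pos h1 h2)
    exact_mod_cast this
  · exact add_le_add_right (mul_le_mul_of_nonneg_left (h s) hA) _

lemma ThatIter_mono (hxstar : xstar ∈ S.I) (hA0 : 0 ≤ A) (n : ℕ) (x : ℝ) :
    ThatIter S pc Kc xstar A n x ≤ ThatIter S pc Kc xstar A (n + 1) x := by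
  induction n generalizing x with
  | zero =>
    show (0 : EReal) ≤ ⨆ τ : S.Stop, S.E x τ (hhat S pc Kc xstar A fun _ => 0)
    exact le_trans (le_of_eq (S.E_never x _).symm)
      (le_iSup (fun τ => S.E x τ (hhat S pc Kc xstar A fun _ => 0)) S.never)
  | succ n ih =>
    have : ThatIter S pc Kc xstar A (n + 1 + 1) x
        = That S pc Kc xstar A (ThatIter S pc Kc xstar A (n + 1)) x := by
      simp only [ThatIter, Function.iterate_succ_apply']
    rw [this]
    have h2 : ThatIter S pc Kc xstar A (n + 1) x
        = That S pc Kc xstar A (ThatIter S pc Kc xstar A n) x := by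
      simp only [ThatIter, Function.iterate_succ_apply']
    rw [h2]
    exact That_mono S pc Kc xstar A hxstar hA0 ih x

lemma That_congr {ζ ζ' : ℝ → EReal}
    (h : ∀ s ∈ S.I, xstar ≤ s → ζ s = ζ' s) (hxstar : xstar ∈ S.I) (x : ℝ) :
    That S pc Kc xstar A ζ x = That S pc Kc xstar A ζ' x := by
  have key : ∀ s : ℝ, S.a < (s : EReal) → (s : EReal) < S.b →
      hhat S pc Kc xstar A ζ s = hhat S pc Kc xstar A ζ' s := by
    intro s hs1 hs2
    unfold hhat
    split
    · rw [h xstar hxstar le_rfl]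
    · rw [h s ⟨hs1, hs2⟩ (le_of_not_gt (by assumption))]
  refine le_antisymm (iSup_mono fun τ => S.E_mono x τ _ _ fun s h1 h2 => (key s h1 h2).le)
    (iSup_mono fun τ => S.E_mono x τ _ _ fun s h1 h2 => (key s h1 h2).ge)

end Aux

/-- Corollary 5 of the paper: regime (β) holds if and only if
`T̂²0(x) = T̂0(x)` for all `x ≥ x*`. -/
theorem regime_beta_iff (S : Setup) (pc Kc xstar A : ℝ)
    (hpc : 0 ≤ pc) (hKc : 0 ≤ Kc) (hxstar : xstar ∈ S.I)
    (hA0 : 0 < A) (hA1 : A < 1)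
    (hS1 : ∃ x ∈ S.I, 0 < hpay S pc Kc xstar x)
    (hS2 : pc + Kc < xstar) :
    regimeBeta S pc Kc xstar A ↔
      ∀ x ∈ S.I, xstar ≤ x →
        ThatIter S pc Kc xstar A 2 x = ThatIter S pc Kc xstar A 1 x := by
  have hA0' : (0:ℝ) ≤ A := hA0.le
  have hmono := ThatIter_mono S pc Kc xstar A hxstar hA0'
  constructor
  · intro hβ x hx hxx
    refine le_antisymm ?_ (hmono 1 x)
    calc ThatIter S pc Kc xstar A 2 x
        ≤ Vhat S pc Kc xstar A x := le_iSup (fun n => ThatIter S pc Kc xstar A n x) 2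
      _ = S.val (toE (hpay S pc Kc xstar)) x := hβ x hx hxx
      _ = ThatIter S pc Kc xstar A 1 x := by rw [ThatIter_one]
  · intro h x hx hxx
    -- all iterates of index ≥ 2 agree with iterate 2 everywhere
    have step : ∀ y : ℝ, ThatIter S pc Kc xstar A 3 y = ThatIter S pc Kc xstar A 2 y := by
      intro y
      have e3 : ThatIter S pc Kc xstar A 3 y
          = That S pc Kc xstar A (ThatIter S pc Kc xstar A 2) y := by
        simp only [ThatIter, Function.iterate_succ_apply']
      have e2 : ThatIter S pc Kc xstar A 2 y
          = That S pc Kc xstar A (ThatIter S pc Kc xstar A 1) y := by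
        simp only [ThatIter, Function.iterate_succ_apply']
      rw [e3, e2]
      exact That_congr S pc Kc xstar A (fun s hs hss => h s hs hss) hxstar y
    have stable : ∀ n : ℕ, ∀ y : ℝ,
        ThatIter S pc Kc xstar A (n + 2) y = ThatIter S pc Kc xstar A 2 y := by
      intro n
      induction n with
      | zero => intro y; rfl
      | succ n ih =>
        intro y
        have e : ThatIter S pc Kc xstar A (n + 1 + 2) y
            = That S pc Kc xstar A (ThatIter S pc Kc xstar A (n + 2)) y := by
          simp only [ThatIter, Function.iterate_succ_apply']
        rw [e]
        have e2 : That S pc Kc xstar A (ThatIter S pc Kc xstar A (n + 2)) y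
            = That S pc Kc xstar A (ThatIter S pc Kc xstar A 2) y := by
          congr 1; funext z; exact ih z
        rw [e2]
        have e3 : That S pc Kc xstar A (ThatIter S pc Kc xstar A 2) y
            = ThatIter S pc Kc xstar A 3 y := by
          simp only [ThatIter, Function.iterate_succ_apply']
        rw [e3]
        exact step y
    have h21 := h x hx hxx
    have hle : ∀ n : ℕ, ThatIter S pc Kc xstar A n x ≤ ThatIter S pc Kc xstar A 1 x := by
      intro n
      match n with
      | 0 => exact hmono 0 x
      | 1 => exact le_rfl
      | (m + 2) => rw [stable m x, h21]
    have : Vhat S pc Kc xstar A x = ThatIter S pc Kc xstar A 1 x :=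
      le_antisymm (iSup_le hle) (le_iSup (fun n => ThatIter S pc Kc xstar A n x) 1)
    rw [this, ThatIter_one]

end
end

section
/- Assume conditions S1* and S2* hold and that regime (α) holds. Then the lifetime value function evaluated at x* satisfies V̂(x*) = max_{z∈(a,x*)} y(z), where y(z) := (−z + p_c + K_c·ψ_r(z)/ψ_r(x*)) / (φ_r(z)/φ_r(x*) − A·ψ_r(z)/ψ_r(x*)). -/
open Filter Set Topology

noncomputable section

/-- The objective in the one-dimensional search for the lifetime value:
`y(z) = (−z + p_c + K_c·ψ_r(z)/ψ_r(x*)) / (φ_r(z)/φ_r(x*) − A·ψ_r(z)/ψ_r(x*))`. -/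
def yObj (S : Setup) (pc Kc xstar A : ℝ) (z : ℝ) : ℝ :=
  (-z + pc + Kc * (S.psi z / S.psi xstar))
    / (S.phi z / S.phi xstar - A * (S.psi z / S.psi xstar))

section AuxLemmas

variable (S : Setup) (pc Kc xstar A : ℝ)

lemma aux_mem_I (hx : xstar ∈ S.I) {z : ℝ} (hz1 : S.a < (z : EReal)) (hz2 : z ≤ xstar) :
    z ∈ S.I :=
  ⟨hz1, lt_of_le_of_lt (EReal.coe_le_coe_iff.2 hz2) hx.2⟩

lemma aux_denom_pos (hx : xstar ∈ S.I) (hA0 : 0 ≤ A) (hA1 : A < 1)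
    {z : ℝ} (hz1 : S.a < (z : EReal)) (hz2 : z ≤ xstar) :
    0 < S.phi z / S.phi xstar - A * (S.psi z / S.psi xstar) := by
  have hzI : z ∈ S.I := aux_mem_I S xstar hx hz1 hz2
  have hps : 0 < S.psi xstar := S.psi_pos hx.1 hx.2
  have hfs : 0 < S.phi xstar := S.phi_pos hx.1 hx.2
  have hpz : 0 < S.psi z := S.psi_pos hzI.1 hzI.2
  have hfz : 0 < S.phi z := S.phi_pos hzI.1 hzI.2
  have h1 : S.psi z ≤ S.psi xstar := (S.psi_mono.monotoneOn) hzI hx hz2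
  have h2 : S.phi xstar ≤ S.phi z := (S.phi_anti.antitoneOn) hzI hx hz2
  have hr1 : S.psi z / S.psi xstar ≤ 1 := (div_le_one hps).2 h1
  have hr2 : 1 ≤ S.phi z / S.phi xstar := (one_le_div hfs).2 h2
  have hr0 : 0 ≤ S.psi z / S.psi xstar := by positivity
  nlinarith

lemma aux_w_lt (hx : xstar ∈ S.I) (hA0 : 0 ≤ A)
    {z : ℝ} (hz1 : S.a < (z : EReal)) (hz2 : z ≤ xstar) :
    0 ≤ A * (S.psi z / S.psi xstar) * (S.phi xstar / S.phi z) ∧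
    A * (S.psi z / S.psi xstar) * (S.phi xstar / S.phi z) ≤ A := by
  have hzI : z ∈ S.I := aux_mem_I S xstar hx hz1 hz2
  have hps : 0 < S.psi xstar := S.psi_pos hx.1 hx.2
  have hfs : 0 < S.phi xstar := S.phi_pos hx.1 hx.2
  have hpz : 0 < S.psi z := S.psi_pos hzI.1 hzI.2
  have hfz : 0 < S.phi z := S.phi_pos hzI.1 hzI.2
  have h1 : S.psi z ≤ S.psi xstar := (S.psi_mono.monotoneOn) hzI hx hz2
  have h2 : S.phi xstar ≤ S.phi z := (S.phi_anti.antitoneOn) hzI hx hz2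
  have hr1 : S.psi z / S.psi xstar ≤ 1 := (div_le_one hps).2 h1
  have hr2 : S.phi xstar / S.phi z ≤ 1 := (div_le_one hfz).2 h2
  have hr0 : 0 ≤ S.psi z / S.psi xstar := by positivity
  have hr0' : 0 ≤ S.phi xstar / S.phi z := by positivity
  have h3 : (S.psi z / S.psi xstar) * (S.phi xstar / S.phi z) ≤ 1 := by nlinarith
  constructor
  · positivity
  · rw [mul_assoc]; exact mul_le_of_le_one_right hA0 h3

/-- `V̂(x*) ≥ 0`. -/
lemma aux_vhat_nonneg : (0 : EReal) ≤ Vhat S pc Kc xstar A xstar := by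
  have h0 : ThatIter S pc Kc xstar A 0 xstar = 0 := by simp [ThatIter]
  calc (0 : EReal) = ThatIter S pc Kc xstar A 0 xstar := h0.symm
    _ ≤ Vhat S pc Kc xstar A xstar := le_iSup (fun n => ThatIter S pc Kc xstar A n xstar) 0

/-- Lower bound: `V̂(x*) ≥ y(z)` for every `z ∈ (a, x*)`. -/
lemma aux_vhat_lower (hx : xstar ∈ S.I) (hA0 : 0 < A) (hA1 : A < 1) (hKc : 0 ≤ Kc)
    {z : ℝ} (hz1 : S.a < (z : EReal)) (hz2 : z < xstar) :
    ((yObj S pc Kc xstar A z : ℝ) : EReal) ≤ Vhat S pc Kc xstar A xstar := by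
  have hzI : z ∈ S.I := aux_mem_I S xstar hx hz1 hz2.le
  have hps : 0 < S.psi xstar := S.psi_pos hx.1 hx.2
  have hfs : 0 < S.phi xstar := S.phi_pos hx.1 hx.2
  have hpz : 0 < S.psi z := S.psi_pos hzI.1 hzI.2
  have hfz : 0 < S.phi z := S.phi_pos hzI.1 hzI.2
  set Y := yObj S pc Kc xstar A z with hY
  set w := A * (S.psi z / S.psi xstar) * (S.phi xstar / S.phi z) with hw
  have hd := aux_denom_pos S xstar A hx hA0.le hA1 hz1 hz2.le
  obtain ⟨hw0, hwA⟩ := aux_w_lt S xstar A hx hA0.le hz1 hz2.le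
  have hw1 : w < 1 := lt_of_le_of_lt hwA hA1
  rcases le_or_gt Y 0 with hY0 | hY0
  · calc ((Y : ℝ) : EReal) ≤ ((0 : ℝ) : EReal) := EReal.coe_le_coe_iff.2 hY0
      _ ≤ _ := by rw [EReal.coe_zero]; exact aux_vhat_nonneg S pc Kc xstar A
  · have hdne : S.phi z / S.phi xstar - A * (S.psi z / S.psi xstar) ≠ 0 := hd.ne'
    have hkey : ∀ t : ℝ,
        (-z + pc + (S.psi z / S.psi xstar) * (Kc + A * t)) * (S.phi xstar / S.phi z)
          = Y * (1 - w) + w * t := by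
      intro t
      have hYg : (-z + pc + Kc * (S.psi z / S.psi xstar))
          = Y * (S.phi z / S.phi xstar - A * (S.psi z / S.psi xstar)) := by
        rw [hY]; unfold yObj; rw [div_mul_cancel₀ _ hdne]
      have hzp : -z + pc = Y * (S.phi z / S.phi xstar - A * (S.psi z / S.psi xstar))
          - Kc * (S.psi z / S.psi xstar) := by linarith
      rw [hw, hzp]
      field_simp
      ring
    have hiter : ∀ n : ℕ,
        ((Y * (1 - w ^ n) : ℝ) : EReal) ≤ ThatIter S pc Kc xstar A n xstar := by
      intro n
      induction n with
      | zero => simp [ThatIter]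
      | succ n ih =>
        have hstep : ThatIter S pc Kc xstar A (n + 1) xstar
            = That S pc Kc xstar A (ThatIter S pc Kc xstar A n) xstar := by
          rw [ThatIter, Function.iterate_succ_apply']; rfl
        rw [hstep]
        have hE := S.E_hit_ge hz1 hx.2 hz2.le (hhat S pc Kc xstar A (ThatIter S pc Kc xstar A n))
        have hA' : (0 : EReal) ≤ ((A : ℝ) : EReal) := by exact_mod_cast hA0.le
        have hr' : (0 : EReal) ≤ ((S.psi z / S.psi xstar : ℝ) : EReal) := by
          have : (0:ℝ) ≤ S.psi z / S.psi xstar := by positivity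
          exact_mod_cast this
        have hq' : (0 : EReal) ≤ ((S.phi xstar / S.phi z : ℝ) : EReal) := by
          have : (0:ℝ) ≤ S.phi xstar / S.phi z := by positivity
          exact_mod_cast this
        have hchain : ((-z + pc + (S.psi z / S.psi xstar) * (Kc + A * (Y * (1 - w ^ n))) : ℝ) : EReal)
            ≤ hhat S pc Kc xstar A (ThatIter S pc Kc xstar A n) z := by
          have hhatz : hhat S pc Kc xstar A (ThatIter S pc Kc xstar A n) z
              = ((-z + pc : ℝ) : EReal) + ((S.psi z / S.psi xstar : ℝ) : EReal)
                * (((Kc : ℝ) : EReal) + ((A : ℝ) : EReal) * ThatIter S pc Kc xstar A n xstar) := by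
            unfold hhat; rw [if_pos hz2]
          have base : ((Kc + A * (Y * (1 - w ^ n)) : ℝ) : EReal)
              ≤ ((Kc : ℝ) : EReal) + ((A : ℝ) : EReal) * ThatIter S pc Kc xstar A n xstar := by
            rw [EReal.coe_add, EReal.coe_mul]
            exact add_le_add_right (mul_le_mul_of_nonneg_left ih hA') _
          have base2 : ((S.psi z / S.psi xstar * (Kc + A * (Y * (1 - w ^ n))) : ℝ) : EReal)
              ≤ ((S.psi z / S.psi xstar : ℝ) : EReal) * (((Kc : ℝ) : EReal)
                + ((A : ℝ) : EReal) * ThatIter S pc Kc xstar A n xstar) := by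
            rw [EReal.coe_mul]
            exact mul_le_mul_of_nonneg_left base hr'
          rw [hhatz,
            show ((-z + pc + S.psi z / S.psi xstar * (Kc + A * (Y * (1 - w ^ n))) : ℝ) : EReal)
              = ((-z + pc : ℝ) : EReal)
                + ((S.psi z / S.psi xstar * (Kc + A * (Y * (1 - w ^ n))) : ℝ) : EReal)
              from EReal.coe_add _ _]
          exact add_le_add_right base2 _
        calc ((Y * (1 - w ^ (n + 1)) : ℝ) : EReal)
            = (((-z + pc + (S.psi z / S.psi xstar) * (Kc + A * (Y * (1 - w ^ n))))
                * (S.phi xstar / S.phi z) : ℝ) : EReal) := by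
              have hreal : Y * (1 - w ^ (n + 1))
                  = (-z + pc + S.psi z / S.psi xstar * (Kc + A * (Y * (1 - w ^ n))))
                    * (S.phi xstar / S.phi z) := by
                rw [hkey (Y * (1 - w ^ n))]; ring
              rw [hreal]
          _ = ((-z + pc + (S.psi z / S.psi xstar) * (Kc + A * (Y * (1 - w ^ n))) : ℝ) : EReal)
                * ((S.phi xstar / S.phi z : ℝ) : EReal) := EReal.coe_mul _ _
          _ ≤ hhat S pc Kc xstar A (ThatIter S pc Kc xstar A n) z
                * ((S.phi xstar / S.phi z : ℝ) : EReal) :=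
              mul_le_mul_of_nonneg_right hchain hq'
          _ = S.E xstar (S.hit z) (hhat S pc Kc xstar A (ThatIter S pc Kc xstar A n)) := hE.symm
          _ ≤ That S pc Kc xstar A (ThatIter S pc Kc xstar A n) xstar :=
              le_iSup (fun τ => S.E xstar τ (hhat S pc Kc xstar A (ThatIter S pc Kc xstar A n)))
                (S.hit z)
    have hlim : Filter.Tendsto (fun n : ℕ => Y * (1 - w ^ n)) atTop (nhds Y) := by
      have hpow : Filter.Tendsto (fun n : ℕ => w ^ n) atTop (nhds 0) := by
        apply tendsto_pow_atTop_nhds_zero_of_lt_one hw0 hw1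
      have h1 : Filter.Tendsto (fun n : ℕ => 1 - w ^ n) atTop (nhds 1) := by
        simpa using (tendsto_const_nhds (x := (1:ℝ)) (f := atTop)).sub hpow
      simpa using h1.const_mul Y
    exact le_of_tendsto (Filter.Tendsto.comp (continuous_coe_real_ereal.tendsto Y) hlim)
      (Filter.Eventually.of_forall fun n =>
        (hiter n).trans (le_iSup (fun m => ThatIter S pc Kc xstar A m xstar) n))

/-- Upper bound on the iterates. -/
lemma aux_iter_upper (hx : xstar ∈ S.I) (hA0 : 0 ≤ A) (hA1 : A < 1) (hS2 : pc + Kc < xstar)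
    {σ : ℝ} (hσ0 : 0 ≤ σ)
    (hub : ∀ z : ℝ, S.a < (z : EReal) → z < xstar → yObj S pc Kc xstar A z ≤ σ) :
    ∀ n : ℕ, ∀ x ∈ S.I, ThatIter S pc Kc xstar A n x ≤ ((σ / S.phi xstar * S.phi x : ℝ) : EReal) := by
  have hps : 0 < S.psi xstar := S.psi_pos hx.1 hx.2
  have hfs : 0 < S.phi xstar := S.phi_pos hx.1 hx.2
  intro n
  induction n with
  | zero =>
    intro x hxI
    have hfx : 0 < S.phi x := S.phi_pos hxI.1 hxI.2
    have : (0:ℝ) ≤ σ / S.phi xstar * S.phi x := by positivity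
    simp only [ThatIter, Function.iterate_zero, id_eq]
    exact_mod_cast this
  | succ n ih =>
    intro x hxI
    have hstep : ThatIter S pc Kc xstar A (n + 1) x
        = That S pc Kc xstar A (ThatIter S pc Kc xstar A n) x := by
      rw [ThatIter, Function.iterate_succ_apply']; rfl
    rw [hstep]
    have hζs : ThatIter S pc Kc xstar A n xstar ≤ ((σ : ℝ) : EReal) := by
      have := ih xstar hx
      have heq : σ / S.phi xstar * S.phi xstar = σ := by field_simp
      rwa [heq] at this
    have hA' : (0 : EReal) ≤ ((A : ℝ) : EReal) := by exact_mod_cast hA0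
    -- pointwise comparison on I
    have hmono : ∀ s : ℝ, S.a < (s : EReal) → (s : EReal) < S.b →
        hhat S pc Kc xstar A (ThatIter S pc Kc xstar A n) s
          ≤ ((σ / S.phi xstar : ℝ) : EReal) * ((S.phi s : ℝ) : EReal) := by
      intro s hs1 hs2
      have hsI : s ∈ S.I := ⟨hs1, hs2⟩
      have hfss : 0 < S.phi s := S.phi_pos hs1 hs2
      have hpss : 0 < S.psi s := S.psi_pos hs1 hs2
      unfold hhat
      split_ifs with hlt
      · -- s < xstar
        have hr' : (0 : EReal) ≤ ((S.psi s / S.psi xstar : ℝ) : EReal) := by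
          have : (0:ℝ) ≤ S.psi s / S.psi xstar := by positivity
          exact_mod_cast this
        have hd := aux_denom_pos S xstar A hx hA0 hA1 hs1 hlt.le
        have hnum : -s + pc + Kc * (S.psi s / S.psi xstar)
            ≤ σ * (S.phi s / S.phi xstar - A * (S.psi s / S.psi xstar)) := by
          have hy := hub s hs1 hlt
          have := (div_le_iff₀ hd).mp hy
          linarith [this]
        have hre : -s + pc + (S.psi s / S.psi xstar) * (Kc + A * σ)
            ≤ σ / S.phi xstar * S.phi s := by
          have h1 : σ * (S.phi s / S.phi xstar) = σ / S.phi xstar * S.phi s := by ring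
          nlinarith [hnum]
        calc ((-s + pc : ℝ) : EReal) + ((S.psi s / S.psi xstar : ℝ) : EReal)
              * (((Kc : ℝ) : EReal) + ((A : ℝ) : EReal) * ThatIter S pc Kc xstar A n xstar)
            ≤ ((-s + pc : ℝ) : EReal) + ((S.psi s / S.psi xstar : ℝ) : EReal)
              * (((Kc : ℝ) : EReal) + ((A : ℝ) : EReal) * ((σ : ℝ) : EReal)) := by
              exact add_le_add_right (mul_le_mul_of_nonneg_left
                (add_le_add_right (mul_le_mul_of_nonneg_left hζs hA') _) hr') _
          _ = ((-s + pc + (S.psi s / S.psi xstar) * (Kc + A * σ) : ℝ) : EReal) := by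
              norm_cast
          _ ≤ ((σ / S.phi xstar * S.phi s : ℝ) : EReal) := EReal.coe_le_coe_iff.2 hre
          _ = ((σ / S.phi xstar : ℝ) : EReal) * ((S.phi s : ℝ) : EReal) := EReal.coe_mul _ _
      · -- s ≥ xstar
        push_neg at hlt
        have hre : -s + pc + Kc + A * (σ / S.phi xstar * S.phi s)
            ≤ σ / S.phi xstar * S.phi s := by
          have hX : (0:ℝ) ≤ σ / S.phi xstar * S.phi s := by positivity
          nlinarith [hX]
        calc ((-s + pc + Kc : ℝ) : EReal) + ((A : ℝ) : EReal) * ThatIter S pc Kc xstar A n s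
            ≤ ((-s + pc + Kc : ℝ) : EReal) + ((A : ℝ) : EReal)
              * ((σ / S.phi xstar * S.phi s : ℝ) : EReal) := by
              exact add_le_add_right (mul_le_mul_of_nonneg_left (ih s hsI) hA') _
          _ = ((-s + pc + Kc + A * (σ / S.phi xstar * S.phi s) : ℝ) : EReal) := by
              norm_cast
          _ ≤ ((σ / S.phi xstar * S.phi s : ℝ) : EReal) := EReal.coe_le_coe_iff.2 hre
          _ = ((σ / S.phi xstar : ℝ) : EReal) * ((S.phi s : ℝ) : EReal) := EReal.coe_mul _ _
    refine iSup_le fun τ => ?_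
    have hσfs : (0:ℝ) ≤ σ / S.phi xstar := by positivity
    have hσfs' : (0 : EReal) ≤ ((σ / S.phi xstar : ℝ) : EReal) := by exact_mod_cast hσfs
    calc S.E x τ (hhat S pc Kc xstar A (ThatIter S pc Kc xstar A n))
        ≤ S.E x τ (fun s => ((σ / S.phi xstar : ℝ) : EReal) * toE S.phi s) :=
          S.E_mono x τ _ _ hmono
      _ = ((σ / S.phi xstar : ℝ) : EReal) * S.E x τ (toE S.phi) :=
          S.E_smul x τ (σ / S.phi xstar) (toE S.phi) hσfs
      _ ≤ ((σ / S.phi xstar : ℝ) : EReal) * ((S.phi x : ℝ) : EReal) :=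
          mul_le_mul_of_nonneg_left (S.phi_excessive hxI.1 hxI.2 τ) hσfs'
      _ = ((σ / S.phi xstar * S.phi x : ℝ) : EReal) := (EReal.coe_mul _ _).symm

lemma aux_vhat_upper (hx : xstar ∈ S.I) (hA0 : 0 ≤ A) (hA1 : A < 1) (hS2 : pc + Kc < xstar)
    {σ : ℝ} (hσ0 : 0 ≤ σ)
    (hub : ∀ z : ℝ, S.a < (z : EReal) → z < xstar → yObj S pc Kc xstar A z ≤ σ) :
    Vhat S pc Kc xstar A xstar ≤ ((σ : ℝ) : EReal) := by
  have hfs : 0 < S.phi xstar := S.phi_pos hx.1 hx.2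
  refine iSup_le fun n => ?_
  have := aux_iter_upper S pc Kc xstar A hx hA0 hA1 hS2 hσ0 hub n xstar hx
  have heq : σ / S.phi xstar * S.phi xstar = σ := by field_simp
  rwa [heq] at this

/-- `val(h)(x*) ≥ h(z)·φ(x*)/φ(z)` for `z ≤ x*`. -/
lemma aux_val_lower (hx : xstar ∈ S.I)
    {z : ℝ} (hz1 : S.a < (z : EReal)) (hz2 : z ≤ xstar) :
    ((hpay S pc Kc xstar z * (S.phi xstar / S.phi z) : ℝ) : EReal)
      ≤ S.val (toE (hpay S pc Kc xstar)) xstar := by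
  have hE := S.E_hit_ge hz1 hx.2 hz2 (toE (hpay S pc Kc xstar))
  calc ((hpay S pc Kc xstar z * (S.phi xstar / S.phi z) : ℝ) : EReal)
      = S.E xstar (S.hit z) (toE (hpay S pc Kc xstar)) := by
        rw [hE]; rw [EReal.coe_mul]; rfl
    _ ≤ S.val (toE (hpay S pc Kc xstar)) xstar :=
        le_iSup (fun τ => S.E xstar τ (toE (hpay S pc Kc xstar))) (S.hit z)

/-- `y(x*) < 0`. -/
lemma aux_y_xstar_neg (hx : xstar ∈ S.I) (hA1 : A < 1) (hS2 : pc + Kc < xstar) :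
    yObj S pc Kc xstar A xstar < 0 := by
  have hps : 0 < S.psi xstar := S.psi_pos hx.1 hx.2
  have hfs : 0 < S.phi xstar := S.phi_pos hx.1 hx.2
  have h1 : S.psi xstar / S.psi xstar = 1 := by field_simp
  have h2 : S.phi xstar / S.phi xstar = 1 := by field_simp
  unfold yObj
  rw [h1, h2]
  apply div_neg_of_neg_of_pos <;> [linarith; linarith]

/-- There is `z₁ ∈ (a, x*)` with `y(z₁) > 0`. -/
lemma aux_exists_pos (hx : xstar ∈ S.I) (hA0 : 0 ≤ A) (hA1 : A < 1) (hS2 : pc + Kc < xstar)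
    (hS1 : ∃ x ∈ S.I, 0 < hpay S pc Kc xstar x) :
    ∃ z : ℝ, S.a < (z : EReal) ∧ z < xstar ∧ 0 < yObj S pc Kc xstar A z := by
  obtain ⟨x, hxI, hxpos⟩ := hS1
  have hxlt : x < xstar := by
    by_contra h
    push_neg at h
    have : hpay S pc Kc xstar x = -x + pc + Kc := by
      unfold hpay; rw [if_neg (not_lt.2 h)]
    rw [this] at hxpos; linarith
  refine ⟨x, hxI.1, hxlt, ?_⟩
  have hd := aux_denom_pos S xstar A hx hA0 hA1 hxI.1 hxlt.le
  have hnum : 0 < -x + pc + Kc * (S.psi x / S.psi xstar) := by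
    have : hpay S pc Kc xstar x = -x + pc + Kc * (S.psi x / S.psi xstar) := by
      unfold hpay; rw [if_pos hxlt]
    linarith [hxpos.trans_eq this]
  exact div_pos hnum hd

end AuxLemmas
section AuxTop

variable (S : Setup) (pc Kc xstar A : ℝ)

/-- `q(z) = y(z)·(1 − w(z))` for `z < x*`. -/
lemma aux_q_eq (hx : xstar ∈ S.I) (hA0 : 0 ≤ A) (hA1 : A < 1)
    {z : ℝ} (hz1 : S.a < (z : EReal)) (hz2 : z < xstar) :
    hpay S pc Kc xstar z * (S.phi xstar / S.phi z)
      = yObj S pc Kc xstar A z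
        * (1 - A * (S.psi z / S.psi xstar) * (S.phi xstar / S.phi z)) := by
  have hzI : z ∈ S.I := aux_mem_I S xstar hx hz1 hz2.le
  have hps : 0 < S.psi xstar := S.psi_pos hx.1 hx.2
  have hfs : 0 < S.phi xstar := S.phi_pos hx.1 hx.2
  have hfz : 0 < S.phi z := S.phi_pos hzI.1 hzI.2
  have hd := aux_denom_pos S xstar A hx hA0 hA1 hz1 hz2.le
  have hYg : yObj S pc Kc xstar A z
      * (S.phi z / S.phi xstar - A * (S.psi z / S.psi xstar))
      = -z + pc + Kc * (S.psi z / S.psi xstar) := by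
    unfold yObj; exact div_mul_cancel₀ _ hd.ne'
  unfold hpay
  rw [if_pos hz2, ← hYg]
  field_simp

/-- Maximum of `y` on a compact subinterval `[c, x*]`. -/
lemma aux_max_Icc (hx : xstar ∈ S.I) (hA0 : 0 ≤ A) (hA1 : A < 1)
    {c : ℝ} (hc1 : S.a < (c : EReal)) (hc2 : c ≤ xstar) :
    ∃ z0 ∈ Icc c xstar, ∀ z ∈ Icc c xstar,
      yObj S pc Kc xstar A z ≤ yObj S pc Kc xstar A z0 := by
  have hsub : Icc c xstar ⊆ S.I := fun z hz =>
    aux_mem_I S xstar hx (lt_of_lt_of_le hc1 (EReal.coe_le_coe_iff.2 hz.1)) hz.2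
  have hψ : ContinuousOn S.psi (Icc c xstar) := S.psi_cont.mono hsub
  have hφ : ContinuousOn S.phi (Icc c xstar) := S.phi_cont.mono hsub
  have hnum : ContinuousOn (fun z : ℝ => -z + pc + Kc * (S.psi z / S.psi xstar))
      (Icc c xstar) := by
    apply ContinuousOn.add
    · exact (Continuous.continuousOn (by continuity))
    · exact ContinuousOn.mul continuousOn_const (hψ.div_const _)
  have hden : ContinuousOn
      (fun z : ℝ => S.phi z / S.phi xstar - A * (S.psi z / S.psi xstar)) (Icc c xstar) :=
    (hφ.div_const _).sub (ContinuousOn.mul continuousOn_const (hψ.div_const _))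
  have hcont : ContinuousOn (yObj S pc Kc xstar A) (Icc c xstar) := by
    apply ContinuousOn.div hnum hden
    intro z hz
    exact (aux_denom_pos S xstar A hx hA0 hA1
      (lt_of_lt_of_le hc1 (EReal.coe_le_coe_iff.2 hz.1)) hz.2).ne'
  obtain ⟨z0, hz0mem, hz0max⟩ := isCompact_Icc.exists_isMaxOn
    (nonempty_Icc.2 hc2) hcont
  exact ⟨z0, hz0mem, fun z hz => hz0max hz⟩

/-- From a set in the right-boundary filter, extract a one-sided interval. -/
lemma aux_interval_of_mem (hax : S.a < (xstar : EReal)) {s : Set ℝ}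
    (hmem : s ∈ fromRight S.a) :
    ∃ c : ℝ, S.a < (c : EReal) ∧ c < xstar ∧
      ∀ z : ℝ, S.a < (z : EReal) → z < c → z ∈ s := by
  obtain ⟨t, ht, hsub⟩ := Filter.mem_comap.mp hmem
  obtain ⟨v, hv, hIoo⟩ := (mem_nhdsGT_iff_exists_Ioo_subset' hax).mp ht
  have hav' : S.a < min v ((xstar : EReal)) := lt_min hv hax
  obtain ⟨c, hc1, hc2⟩ := EReal.lt_iff_exists_real_btwn.mp hav'
  refine ⟨c, hc1, ?_, ?_⟩
  · have h : (c : EReal) < (xstar : EReal) := lt_of_lt_of_le hc2 (min_le_right _ _)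
    exact_mod_cast h
  · intro z hz1 hz2
    apply hsub
    apply hIoo
    exact ⟨hz1, lt_of_lt_of_le (lt_trans (EReal.coe_lt_coe_iff.2 hz2) hc2) (min_le_left _ _)⟩

/-- Membership of the strip `(a, x*)` in the boundary filter. -/
lemma aux_D_eventually (hax : S.a < (xstar : EReal)) :
    ∀ᶠ z : ℝ in fromRight S.a, S.a < (z : EReal) ∧ z < xstar := by
  have h1 : Ioi S.a ∩ Iio ((xstar : EReal)) ∈ nhdsWithin S.a (Ioi S.a) :=
    inter_mem self_mem_nhdsWithin (mem_nhdsWithin_of_mem_nhds (Iio_mem_nhds hax))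
  have h2 := Filter.preimage_mem_comap (m := fun x : ℝ => (x : EReal)) h1
  apply Filter.mem_of_superset h2
  intro z hz
  exact ⟨hz.1, EReal.coe_lt_coe_iff.1 hz.2⟩

/-- `w(z) → 0` as `z → a+`. -/
lemma aux_w_tendsto (hx : xstar ∈ S.I) :
    Filter.Tendsto (fun z : ℝ => A * (S.psi z / S.psi xstar) * (S.phi xstar / S.phi z))
      (fromRight S.a) (nhds 0) := by
  have h1 : Filter.Tendsto (fun z : ℝ => A / S.psi xstar * S.psi z)
      (fromRight S.a) (nhds 0) := by
    simpa using S.psi_lim_a.const_mul (A / S.psi xstar)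
  have h2 : Filter.Tendsto (fun z : ℝ => S.phi xstar / S.phi z)
      (fromRight S.a) (nhds 0) :=
    Filter.Tendsto.div_atTop tendsto_const_nhds S.phi_lim_a
  have h3 := h1.mul h2
  rw [mul_zero] at h3
  apply h3.congr
  intro z
  ring

end AuxTop
/-- Lemma 11 of the paper: in regime (α),
`V̂(x*) = max_{z ∈ (a,x*)} y(z)`. -/
theorem lifetime_value_at_xstar (S : Setup) (pc Kc xstar A : ℝ)
    (hpc : 0 ≤ pc) (hKc : 0 ≤ Kc) (hxstar : xstar ∈ S.I)
    (hA0 : 0 < A) (hA1 : A < 1)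
    (hS1 : ∃ x ∈ S.I, 0 < hpay S pc Kc xstar x)
    (hS2 : pc + Kc < xstar)
    (hreg : regimeAlpha S pc Kc xstar A) :
    ∃ z0 : ℝ, S.a < (z0 : EReal) ∧ z0 < xstar ∧
      (∀ z : ℝ, S.a < (z : EReal) → z < xstar →
        yObj S pc Kc xstar A z ≤ yObj S pc Kc xstar A z0) ∧
      Vhat S pc Kc xstar A xstar = ((yObj S pc Kc xstar A z0 : ℝ) : EReal) := by
  obtain ⟨z1, hz11, hz12, hz13⟩ :=
    aux_exists_pos S pc Kc xstar A hxstar hA0.le hA1 hS2 hS1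
  by_cases hP : ∃ z0 : ℝ, S.a < (z0 : EReal) ∧ z0 < xstar ∧
      ∀ z : ℝ, S.a < (z : EReal) → z < xstar →
        yObj S pc Kc xstar A z ≤ yObj S pc Kc xstar A z0
  · obtain ⟨z0, h1, h2, h3⟩ := hP
    have hσ0 : 0 ≤ yObj S pc Kc xstar A z0 :=
      le_of_lt (lt_of_lt_of_le hz13 (h3 z1 hz11 hz12))
    refine ⟨z0, h1, h2, h3, le_antisymm ?_ ?_⟩
    · exact aux_vhat_upper S pc Kc xstar A hxstar hA0.le hA1 hS2 hσ0 h3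
    · exact aux_vhat_lower S pc Kc xstar A hxstar hA0 hA1 hKc h1 h2
  · exfalso
    have hax : S.a < (xstar : EReal) := hxstar.1
    have hval := hreg xstar hxstar le_rfl
    set D : Set ℝ := {z : ℝ | S.a < (z : EReal) ∧ z < xstar} with hD
    by_cases hbdd : BddAbove (yObj S pc Kc xstar A '' D)
    · -- bounded case
      set σ := sSup (yObj S pc Kc xstar A '' D) with hσ
      have hz1D : z1 ∈ D := ⟨hz11, hz12⟩
      have hne : (yObj S pc Kc xstar A '' D).Nonempty := ⟨_, ⟨z1, hz1D, rfl⟩⟩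
      have hσz1 : yObj S pc Kc xstar A z1 ≤ σ := le_csSup hbdd ⟨z1, hz1D, rfl⟩
      have hσpos : 0 < σ := lt_of_lt_of_le hz13 hσz1
      have hub : ∀ z : ℝ, S.a < (z : EReal) → z < xstar → yObj S pc Kc xstar A z ≤ σ :=
        fun z hza hzx => le_csSup hbdd ⟨z, ⟨hza, hzx⟩, rfl⟩
      have hVu : Vhat S pc Kc xstar A xstar ≤ ((σ : ℝ) : EReal) :=
        aux_vhat_upper S pc Kc xstar A hxstar hA0.le hA1 hS2 hσpos.le hub
      obtain ⟨r, hr1, hr2⟩ := EReal.lt_iff_exists_real_btwn.mp (lt_of_lt_of_le hval hVu)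
      have hrσ : r < σ := by exact_mod_cast hr2
      rcases le_or_gt r 0 with hr0 | hr0
      · -- r ≤ 0 : use z1 directly
        have hq := aux_q_eq S pc Kc xstar A hxstar hA0.le hA1 hz11 hz12
        have hw := aux_w_lt S xstar A hxstar hA0.le hz11 hz12.le
        have hqpos : 0 < hpay S pc Kc xstar z1 * (S.phi xstar / S.phi z1) := by
          rw [hq]; apply mul_pos hz13; linarith [hw.2]
        have hvle := aux_val_lower S pc Kc xstar hxstar hz11 hz12.le
        have hlt : ((hpay S pc Kc xstar z1 * (S.phi xstar / S.phi z1) : ℝ) : EReal)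
            < ((r : ℝ) : EReal) := lt_of_le_of_lt hvle hr1
        have := EReal.coe_lt_coe_iff.1 hlt
        linarith
      · -- 0 < r < σ
        set m' := (r + σ) / 2 with hm'
        have hm'1 : r < m' := by rw [hm']; linarith
        have hm'2 : m' < σ := by rw [hm']; linarith
        have hm'pos : 0 < m' := by linarith
        have hm'mem : {z : ℝ | yObj S pc Kc xstar A z ≤ m'} ∉ fromRight S.a := by
          intro hmem
          obtain ⟨c, hc1, hc2, hcall⟩ := aux_interval_of_mem S xstar hax hmem
          obtain ⟨z0, hz0mem, hz0max⟩ :=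
            aux_max_Icc S pc Kc xstar A hxstar hA0.le hA1 hc1 hc2.le
          obtain ⟨yv, ⟨z', hz'D, rfl⟩, hyv⟩ := exists_lt_of_lt_csSup hne hm'2
          have hz'c : c ≤ z' := by
            by_contra hlt
            push_neg at hlt
            have hz'le : yObj S pc Kc xstar A z' ≤ m' := hcall z' hz'D.1 hlt
            linarith
          have hz'mem : z' ∈ Icc c xstar := ⟨hz'c, hz'D.2.le⟩
          have hz0big : m' < yObj S pc Kc xstar A z0 :=
            lt_of_lt_of_le hyv (hz0max z' hz'mem)
          have hz0lt : z0 < xstar := by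
            rcases lt_or_eq_of_le hz0mem.2 with h | h
            · exact h
            · exfalso
              have hneg := aux_y_xstar_neg S pc Kc xstar A hxstar hA1 hS2
              rw [h] at hz0big
              linarith
          apply hP
          refine ⟨z0, lt_of_lt_of_le hc1 (EReal.coe_le_coe_iff.2 hz0mem.1), hz0lt, ?_⟩
          intro z hzq hzlt
          rcases lt_or_ge z c with h | h
          · exact le_trans (hcall z hzq h) (le_of_lt hz0big)
          · exact hz0max z ⟨h, hzlt.le⟩
        set δ := (m' - r) / m' with hδ
        have hδpos : 0 < δ := div_pos (by linarith) hm'pos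
        have hδ1 : δ < 1 := by rw [hδ, div_lt_one hm'pos]; linarith
        have hwev : ∀ᶠ z : ℝ in fromRight S.a,
            A * (S.psi z / S.psi xstar) * (S.phi xstar / S.phi z) < δ :=
          (aux_w_tendsto S xstar A hxstar).eventually_lt_const hδpos
        have hDev := aux_D_eventually S xstar hax
        have hand := hwev.and hDev
        have hex : ∃ z : ℝ,
            ((A * (S.psi z / S.psi xstar) * (S.phi xstar / S.phi z) < δ) ∧
              (S.a < (z : EReal) ∧ z < xstar)) ∧ m' < yObj S pc Kc xstar A z := by
          by_contra hno
          push_neg at hno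
          exact hm'mem (Filter.mem_of_superset hand fun z hz => hno z hz)
        obtain ⟨z, ⟨hwz, hzD1, hzD2⟩, hyz⟩ := hex
        have hq := aux_q_eq S pc Kc xstar A hxstar hA0.le hA1 hzD1 hzD2
        have hmr : m' * (1 - δ) = r := by
          rw [hδ]
          field_simp
          ring
        have hqgt : r < hpay S pc Kc xstar z * (S.phi xstar / S.phi z) := by
          rw [hq]
          have h1 : 1 - δ < 1 - A * (S.psi z / S.psi xstar) * (S.phi xstar / S.phi z) := by
            linarith
          nlinarith [hyz, h1, hδ1, hm'pos, hmr]
        have hvle := aux_val_lower S pc Kc xstar hxstar hzD1 hzD2.le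
        have hlt : ((hpay S pc Kc xstar z * (S.phi xstar / S.phi z) : ℝ) : EReal)
            < ((r : ℝ) : EReal) := lt_of_le_of_lt hvle hr1
        have := EReal.coe_lt_coe_iff.1 hlt
        linarith
    · -- unbounded case
      obtain ⟨r, hr1, hr2⟩ :=
        EReal.lt_iff_exists_real_btwn.mp (lt_of_lt_of_le hval le_top)
      obtain ⟨yv, hyvmem, hbig⟩ := not_bddAbove_iff.mp hbdd (max (r / (1 - A)) 0)
      obtain ⟨z, hzD, rfl⟩ := hyvmem
      have hypos : 0 < yObj S pc Kc xstar A z := lt_of_le_of_lt (le_max_right _ _) hbig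
      have hyr : r / (1 - A) < yObj S pc Kc xstar A z :=
        lt_of_le_of_lt (le_max_left _ _) hbig
      have h1A : 0 < 1 - A := by linarith
      have hq := aux_q_eq S pc Kc xstar A hxstar hA0.le hA1 hzD.1 hzD.2
      have hw := aux_w_lt S xstar A hxstar hA0.le hzD.1 hzD.2.le
      have hrlt : r < (1 - A) * yObj S pc Kc xstar A z := by
        have := (div_lt_iff₀ h1A).mp hyr
        linarith
      have hqgt : r < hpay S pc Kc xstar z * (S.phi xstar / S.phi z) := by
        rw [hq]
        nlinarith [hw.2, hypos]
      have hvle := aux_val_lower S pc Kc xstar hxstar hzD.1 hzD.2.le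
      have hlt : ((hpay S pc Kc xstar z * (S.phi xstar / S.phi z) : ℝ) : EReal)
          < ((r : ℝ) : EReal) := lt_of_le_of_lt hvle hr1
      have := EReal.coe_lt_coe_iff.1 hlt
      linarith

end
end
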